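/- arXiv:1609.07301 — 9 statements merged into one kernel-verified Lean document; each statement's English description precedes it below -/
import Mathlib

section
/- For every natural number p and every real number z with |z| < 1, the exponential generating function of the unsigned Stirling numbers of the first kind satisfies ∑_{n=0}^∞ c(n,p)·z^n/n! = (-log(1-z))^p / p!. -/
/-- Unsigned Stirling numbers of the first kind. -/
def stirling1 : ℕ → ℕ → ℕ
  | 0, 0 => 1
  | 0, _ + 1 => 0
  | _ + 1, 0 => 0
  | n + 1, k + 1 => n * stirling1 n (k + 1) + stirling1 n k

/-- Stirling numbers of the second kind. -/
def stirling2 : ℕ → ℕ → ℕ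
  | 0, 0 => 1
  | 0, _ + 1 => 0
  | _ + 1, 0 => 0
  | n + 1, k + 1 => (k + 1) * stirling2 n (k + 1) + stirling2 n k

/-- First-order Eulerian numbers. -/
def eulerian : ℕ → ℕ → ℕ
  | 0, 0 => 1
  | 0, _ + 1 => 0
  | n + 1, 0 => eulerian n 0
  | n + 1, m + 1 => (m + 2) * eulerian n (m + 1) + (n - m) * eulerian n m

/-- Second-order Eulerian numbers. -/
def eulerian2 : ℕ → ℕ → ℕ
  | 0, 0 => 1
  | 0, _ + 1 => 0
  | n + 1, 0 => eulerian2 n 0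
  | n + 1, m + 1 => (m + 2) * eulerian2 n (m + 1) + (2 * n - m) * eulerian2 n m

lemma stirling1_le_factorial : ∀ n k, stirling1 n k ≤ n.factorial
  | 0, 0 => le_refl _
  | 0, _ + 1 => Nat.zero_le _
  | n + 1, 0 => by simp [stirling1]
  | n + 1, k + 1 => by
    have h1 := stirling1_le_factorial n (k + 1)
    have h2 := stirling1_le_factorial n k
    calc stirling1 (n+1) (k+1) = n * stirling1 n (k+1) + stirling1 n k := rfl
      _ ≤ n * n.factorial + n.factorial := by
          exact Nat.add_le_add (Nat.mul_le_mul_left _ h1) h2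
      _ = (n+1).factorial := by rw [Nat.factorial_succ]; ring

lemma term_bound (p n : ℕ) (z : ℝ) :
    ‖(stirling1 n p : ℝ) * z ^ n / (n.factorial : ℝ)‖ ≤ |z| ^ n := by
  have hfac : (0:ℝ) < (n.factorial : ℝ) := by positivity
  rw [norm_div, norm_mul, Real.norm_natCast, Real.norm_natCast, div_le_iff₀ hfac]
  calc (stirling1 n p : ℝ) * ‖z ^ n‖ ≤ (n.factorial : ℝ) * ‖z ^ n‖ := by
        apply mul_le_mul_of_nonneg_right _ (norm_nonneg _)
        exact_mod_cast stirling1_le_factorial n p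
    _ = |z| ^ n * (n.factorial : ℝ) := by
        rw [norm_pow, Real.norm_eq_abs]; ring

lemma summable_F (p : ℕ) {z : ℝ} (hz : |z| < 1) :
    Summable fun n : ℕ => (stirling1 n p : ℝ) * z ^ n / (n.factorial : ℝ) := by
  apply Summable.of_norm_bounded (summable_geometric_of_lt_one (abs_nonneg z) hz)
  exact fun n => term_bound p n z

lemma summable_D (p : ℕ) {r : ℝ} (hr0 : 0 < r) (hr : r < 1) :
    Summable fun n : ℕ => (n : ℝ) * r ^ (n - 1) := by
  rw [← summable_nat_add_iff 1]
  simp only [Nat.add_sub_cancel]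
  have : Summable fun n : ℕ => ((n : ℝ) + 1) * r ^ n := by
    have h1 : Summable fun n : ℕ => (n : ℝ) * r ^ n := by
      have := summable_pow_mul_geometric_of_norm_lt_one (R := ℝ) 1 (by
        rwa [Real.norm_eq_abs, abs_of_pos hr0])
      simpa using this
    have h2 : Summable fun n : ℕ => r ^ n := summable_geometric_of_lt_one hr0.le hr
    simpa [add_mul] using h1.add h2
  exact this.congr fun n => by push_cast; ring

lemma Dterm_bound (p n : ℕ) {y r : ℝ} (hy : |y| ≤ r) :
    ‖(stirling1 n p : ℝ) * ((n : ℝ) * y ^ (n - 1)) / (n.factorial : ℝ)‖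
      ≤ (n : ℝ) * r ^ (n - 1) := by
  have hr0 : 0 ≤ r := (abs_nonneg y).trans hy
  have h1 : (stirling1 n p : ℝ) ≤ (n.factorial : ℝ) := by
    exact_mod_cast stirling1_le_factorial n p
  have hfac : (0:ℝ) < (n.factorial : ℝ) := by positivity
  calc ‖(stirling1 n p : ℝ) * ((n : ℝ) * y ^ (n - 1)) / (n.factorial : ℝ)‖
      = (stirling1 n p : ℝ) * ((n : ℝ) * |y| ^ (n - 1)) / (n.factorial : ℝ) := by
        simp [abs_mul, abs_div, abs_pow, abs_of_pos hfac]
    _ ≤ (n.factorial : ℝ) * ((n : ℝ) * r ^ (n - 1)) / (n.factorial : ℝ) := by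
        gcongr
    _ = (n : ℝ) * r ^ (n - 1) := by field_simp

lemma summable_Dterm (p : ℕ) {z : ℝ} (hz : |z| < 1) :
    Summable fun n : ℕ =>
      (stirling1 n p : ℝ) * ((n : ℝ) * z ^ (n - 1)) / (n.factorial : ℝ) := by
  set r : ℝ := (1 + |z|) / 2 with hr
  have h0 : 0 ≤ |z| := abs_nonneg z
  have hr0 : 0 < r := by rw [hr]; linarith
  have hr1 : r < 1 := by rw [hr]; linarith
  have hzr : |z| ≤ r := by rw [hr]; linarith
  exact Summable.of_norm_bounded (summable_D p hr0 hr1) fun n => Dterm_bound p n hzr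

noncomputable def Fs (p : ℕ) (z : ℝ) : ℝ :=
  ∑' n : ℕ, (stirling1 n p : ℝ) * z ^ n / (n.factorial : ℝ)

lemma hasDerivAt_Fs (p : ℕ) {z : ℝ} (hz : |z| < 1) :
    HasDerivAt (Fs p)
      (∑' n : ℕ, (stirling1 n p : ℝ) * ((n : ℝ) * z ^ (n - 1)) / (n.factorial : ℝ)) z := by
  set r : ℝ := (1 + |z|) / 2 with hr
  have h0 : 0 ≤ |z| := abs_nonneg z
  have hr0 : 0 < r := by rw [hr]; linarith
  have hr1 : r < 1 := by rw [hr]; linarith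
  have hzr : |z| < r := by rw [hr]; linarith
  apply hasDerivAt_tsum_of_isPreconnected (summable_D p hr0 hr1)
      Metric.isOpen_ball (convex_ball (0:ℝ) r).isPreconnected
      (g := fun n w => (stirling1 n p : ℝ) * w ^ n / (n.factorial : ℝ))
      (g' := fun n w => (stirling1 n p : ℝ) * ((n : ℝ) * w ^ (n - 1)) / (n.factorial : ℝ))
      (y₀ := 0)
  · intro n y _
    exact ((hasDerivAt_pow n y).const_mul (stirling1 n p : ℝ)).div_const _
  · intro n y hy
    rw [Metric.mem_ball, Real.dist_eq, sub_zero] at hy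
    exact Dterm_bound p n hy.le
  · simpa [Metric.mem_ball, Real.dist_eq] using hr0
  · exact summable_F p (by simp : |(0:ℝ)| < 1)
  · simpa [Metric.mem_ball, Real.dist_eq] using hzr

lemma ode_Fs (p : ℕ) {z : ℝ} (hz : |z| < 1) :
    (1 - z) * ∑' n : ℕ,
        (stirling1 n (p+1) : ℝ) * ((n : ℝ) * z ^ (n - 1)) / (n.factorial : ℝ)
      = Fs p z := by
  have hsD := summable_Dterm (p+1) hz
  have hterm : ∀ n : ℕ,
      (stirling1 (n+1) (p+1) : ℝ) * (((n+1 : ℕ) : ℝ) * z ^ (n + 1 - 1)) / (((n+1 : ℕ).factorial : ℝ))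
        = z * ((stirling1 n (p+1) : ℝ) * ((n : ℝ) * z ^ (n - 1)) / (n.factorial : ℝ))
          + (stirling1 n p : ℝ) * z ^ n / (n.factorial : ℝ) := by
    intro n
    have hrec : (stirling1 (n+1) (p+1) : ℝ)
        = n * stirling1 n (p+1) + stirling1 n p := by
      norm_cast
    cases n with
    | zero => simp [stirling1]
    | succ m =>
      have hf1 : ((m+1).factorial : ℝ) ≠ 0 := by positivity
      have hf2 : (((m+1)+1).factorial : ℝ) = ((m+1)+1) * (m+1).factorial := by
        exact_mod_cast Nat.factorial_succ (m+1)
      rw [hrec, hf2]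
      push_cast
      field_simp
      ring
  have hsplit : (∑' n : ℕ,
      (stirling1 n (p+1) : ℝ) * ((n : ℝ) * z ^ (n - 1)) / (n.factorial : ℝ))
      = z * (∑' n : ℕ,
        (stirling1 n (p+1) : ℝ) * ((n : ℝ) * z ^ (n - 1)) / (n.factorial : ℝ)) + Fs p z := by
    conv_lhs => rw [hsD.tsum_eq_zero_add]
    rw [tsum_congr hterm, Summable.tsum_add (hsD.mul_left z) (summable_F p hz), tsum_mul_left]
    simp [Fs]
  nlinarith [hsplit]

lemma Fs_eq (p : ℕ) : ∀ z : ℝ, |z| < 1 →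
    Fs p z = (-Real.log (1 - z)) ^ p / (p.factorial : ℝ) := by
  induction p with
  | zero =>
    intro z hz
    rw [Fs, tsum_eq_single 0 (by
      intro n hn
      obtain ⟨m, rfl⟩ := Nat.exists_eq_succ_of_ne_zero hn
      simp [stirling1])]
    simp [stirling1]
  | succ p ih =>
    intro z hz
    set s : Set ℝ := Metric.ball (0:ℝ) 1 with hs
    have hmem : ∀ w : ℝ, w ∈ s ↔ |w| < 1 := by
      intro w; rw [hs, Metric.mem_ball, Real.dist_eq, sub_zero]
    set G : ℝ → ℝ := fun w => (-Real.log (1 - w)) ^ (p+1) / ((p+1).factorial : ℝ) with hG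
    have key : ∀ w ∈ s, HasDerivWithinAt (fun x => Fs (p+1) x - G x) 0 s w := by
      intro w hw
      rw [hmem] at hw
      have h1w : (0:ℝ) < 1 - w := by have := abs_lt.1 hw; linarith
      have hF := hasDerivAt_Fs (p+1) hw
      have hFval : (∑' n : ℕ,
          (stirling1 n (p+1) : ℝ) * ((n : ℝ) * w ^ (n - 1)) / (n.factorial : ℝ))
            = (-Real.log (1 - w)) ^ p / (p.factorial : ℝ) / (1 - w) := by
        have hode := ode_Fs p hw
        rw [← ih w hw]
        field_simp at hode ⊢
        linarith [hode]
      rw [hFval] at hF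
      have hL : HasDerivAt (fun x : ℝ => -Real.log (1 - x)) (1 - w)⁻¹ w := by
        have hinner : HasDerivAt (fun x : ℝ => 1 - x) (-1) w :=
          (hasDerivAt_id w).const_sub 1
        have h := (Real.hasDerivAt_log h1w.ne').comp w hinner
        have := h.neg
        rw [show -((1 - w)⁻¹ * -1) = (1 - w)⁻¹ by ring] at this
        exact this
      have hGd : HasDerivAt G
          ((-Real.log (1 - w)) ^ p / (p.factorial : ℝ) / (1 - w)) w := by
        have h := (hL.pow (p+1)).div_const ((p+1).factorial : ℝ)
        have hval : ((p+1 : ℕ) : ℝ) * (-Real.log (1 - w)) ^ (p + 1 - 1) * (1 - w)⁻¹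
              / ((p+1).factorial : ℝ)
            = (-Real.log (1 - w)) ^ p / (p.factorial : ℝ) / (1 - w) := by
          have hf2 : ((p+1).factorial : ℝ) = (p+1) * p.factorial := by
            exact_mod_cast Nat.factorial_succ p
          rw [show (p+1-1 : ℕ) = p from rfl, hf2]
          have hfp : (p.factorial : ℝ) ≠ 0 := by positivity
          push_cast
          field_simp
        rw [hval] at h
        exact h
      have := (hF.sub hGd)
      rw [sub_self] at this
      exact this.hasDerivWithinAt
    have hz1 : z ∈ s := (hmem z).2 hz
    have h01 : (0:ℝ) ∈ s := (hmem 0).2 (by simp)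
    have hmv := Convex.norm_image_sub_le_of_norm_hasDerivWithin_le
      (f := fun x => Fs (p+1) x - G x) (f' := fun _ => 0) (C := 0)
      key (fun x _ => by simp) (convex_ball (0:ℝ) 1) h01 hz1
    rw [zero_mul, norm_le_zero_iff, sub_eq_zero] at hmv
    have hF0 : Fs (p+1) 0 = 0 := by
      rw [Fs]
      have : ∀ n : ℕ, (stirling1 n (p+1) : ℝ) * (0:ℝ) ^ n / (n.factorial : ℝ) = 0 := by
        intro n; cases n <;> simp [stirling1]
      simp [this]
    have hG0 : G 0 = 0 := by
      rw [hG]; simp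
    have h2 : Fs (p+1) z - G z = 0 := by simpa [hF0, hG0] using hmv
    have h3 := sub_eq_zero.1 h2
    rw [h3]

theorem egf_stirling1 (p : ℕ) (z : ℝ) (hz : |z| < 1) :
    HasSum (fun n : ℕ => (stirling1 n p : ℝ) * z ^ n / (n.factorial : ℝ))
      ((-Real.log (1 - z)) ^ p / (p.factorial : ℝ)) := by
  have := (summable_F p hz).hasSum
  rwa [show (∑' n : ℕ, (stirling1 n p : ℝ) * z ^ n / (n.factorial : ℝ))
      = (-Real.log (1 - z)) ^ p / (p.factorial : ℝ) from Fs_eq p z hz] at this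
end

section
/- For every natural number p and every real number z with |z| < 1, ∑_{n=0}^∞ c(n+1,p+1)·z^n/n! = (-log(1-z))^p / (p! · (1-z)). -/
lemma stirling1_rec (n k : ℕ) :
    stirling1 (n+1) (k+1) = n * stirling1 n (k+1) + stirling1 n k := rfl

/-- The identity `c(n+1, p+1)/n! = ∑_{k ≤ n} c(k, p)/k!`. -/
lemma stirling1_succ_div_factorial (p : ℕ) : ∀ n : ℕ,
    (stirling1 (n+1) (p+1) : ℝ) / (n.factorial : ℝ)
    = ∑ k ∈ Finset.range (n+1), (stirling1 k p : ℝ) / (k.factorial : ℝ) := by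
  intro n
  induction n with
  | zero => simp [stirling1_rec]
  | succ n ih =>
      rw [Finset.sum_range_succ, ← ih, stirling1_rec]
      have h1 : ((n+1).factorial : ℝ) = (n+1) * n.factorial := by
        simp [Nat.factorial_succ]
      have h2 : (n.factorial : ℝ) ≠ 0 := Nat.cast_ne_zero.mpr n.factorial_ne_zero
      have h3 : ((n:ℝ)+1) ≠ 0 := by positivity
      push_cast
      rw [h1]
      field_simp

/-- From the EGF of `c(·, p)` deduce the EGF of the shifted sequence `c(· + 1, p + 1)`,
via a Cauchy product with the geometric series. -/
lemma hasSum_stirling1_shift (p : ℕ)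
    (hT : ∀ z : ℝ, |z| < 1 → HasSum (fun n : ℕ => (stirling1 n p : ℝ) * z ^ n / (n.factorial : ℝ))
      ((-Real.log (1 - z)) ^ p / (p.factorial : ℝ)))
    (z : ℝ) (hz : |z| < 1) :
    HasSum (fun n : ℕ => (stirling1 (n + 1) (p + 1) : ℝ) * z ^ n / (n.factorial : ℝ))
      ((-Real.log (1 - z)) ^ p / ((p.factorial : ℝ) * (1 - z))) := by
  have hz' : |(|z|)| < 1 := by rwa [abs_abs]
  have hf := hT z hz
  have hfa := hT |z| hz'
  have hfn : Summable fun n : ℕ => ‖(stirling1 n p : ℝ) * z ^ n / (n.factorial : ℝ)‖ := by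
    refine hfa.summable.congr fun n => ?_
    simp [Real.norm_eq_abs, abs_div, abs_mul, abs_pow, Nat.abs_cast]
  have hg := hasSum_geometric_of_abs_lt_one hz
  have hgn : Summable fun n : ℕ => ‖z ^ n‖ := by
    simpa [abs_pow] using (hasSum_geometric_of_abs_lt_one hz').summable
  have key := hasSum_sum_range_mul_of_summable_norm hfn hgn
  rw [hf.tsum_eq, hg.tsum_eq] at key
  have hfun : ∀ n : ℕ, (∑ k ∈ Finset.range (n+1),
      ((stirling1 k p : ℝ) * z ^ k / (k.factorial : ℝ)) * z ^ (n - k))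
      = (stirling1 (n + 1) (p + 1) : ℝ) * z ^ n / (n.factorial : ℝ) := by
    intro n
    have : ∀ k ∈ Finset.range (n+1),
        ((stirling1 k p : ℝ) * z ^ k / (k.factorial : ℝ)) * z ^ (n - k)
        = ((stirling1 k p : ℝ) / (k.factorial : ℝ)) * z ^ n := by
      intro k hk
      have hk' : k ≤ n := Nat.lt_succ_iff.mp (Finset.mem_range.mp hk)
      rw [div_mul_eq_mul_div, mul_assoc, ← pow_add, Nat.add_sub_cancel' hk']
      ring
    rw [Finset.sum_congr rfl this, ← Finset.sum_mul, ← stirling1_succ_div_factorial p n]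
    ring
  have hval : (-Real.log (1 - z)) ^ p / (p.factorial : ℝ) * (1 - z)⁻¹
      = (-Real.log (1 - z)) ^ p / ((p.factorial : ℝ) * (1 - z)) := by
    rw [← div_eq_mul_inv, div_div]
  rw [funext hfun, hval] at key
  exact key

/-- Termwise integration: from the EGF of `c(· + 1, p + 1)` deduce the EGF of `c(·, p + 1)`. -/
lemma hasSum_stirling1_integrate (p : ℕ)
    (hS : ∀ z : ℝ, |z| < 1 →
      HasSum (fun n : ℕ => (stirling1 (n + 1) (p + 1) : ℝ) * z ^ n / (n.factorial : ℝ))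
        ((-Real.log (1 - z)) ^ p / ((p.factorial : ℝ) * (1 - z))))
    (z : ℝ) (hz : |z| < 1) :
    HasSum (fun n : ℕ => (stirling1 n (p + 1) : ℝ) * z ^ n / (n.factorial : ℝ))
      ((-Real.log (1 - z)) ^ (p + 1) / ((p + 1).factorial : ℝ)) := by
  have hxz : ∀ x ∈ Set.uIcc (0:ℝ) z, |x| ≤ |z| := by
    intro x hx
    rcases Set.mem_uIcc.mp hx with ⟨h1, h2⟩ | ⟨h1, h2⟩
    · rw [abs_of_nonneg h1]; exact h2.trans (le_abs_self z)
    · rw [abs_of_nonpos h2]; exact (neg_le_neg h1).trans (neg_le_abs z)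
  have hx1 : ∀ x ∈ Set.uIcc (0:ℝ) z, |x| < 1 := fun x hx => lt_of_le_of_lt (hxz x hx) hz
  have h1x : ∀ x ∈ Set.uIcc (0:ℝ) z, (0:ℝ) < 1 - x := by
    intro x hx
    have := (abs_lt.mp (hx1 x hx)).2
    linarith
  set F : ℕ → C(ℝ, ℝ) := fun n =>
    ⟨fun x => (stirling1 (n + 1) (p + 1) : ℝ) * x ^ n / (n.factorial : ℝ),
     ((continuous_const.mul (continuous_pow n)).div_const _)⟩ with hF
  have hz' : |(|z|)| < 1 := by rwa [abs_abs]
  have hbd := (hS |z| hz').summable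
  have hsum : Summable fun n : ℕ =>
      ‖(F n).restrict (⟨Set.uIcc 0 z, isCompact_uIcc⟩ : TopologicalSpace.Compacts ℝ)‖ := by
    refine Summable.of_nonneg_of_le (fun n => norm_nonneg _) (fun n => ?_) hbd
    rw [ContinuousMap.norm_le _ (by positivity)]
    rintro ⟨x, hx⟩
    simp only [ContinuousMap.restrict_apply, hF, ContinuousMap.coe_mk]
    rw [Real.norm_eq_abs, abs_div, abs_mul, abs_pow, Nat.abs_cast, Nat.abs_cast]
    have h5 : ((stirling1 (n+1) (p+1) : ℝ)) * |x| ^ n ≤ (stirling1 (n+1) (p+1) : ℝ) * |z| ^ n :=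
      mul_le_mul_of_nonneg_left (pow_le_pow_left₀ (abs_nonneg x) (hxz x hx) n) (Nat.cast_nonneg _)
    exact div_le_div_of_nonneg_right h5 (Nat.cast_nonneg _)
  have key := intervalIntegral.hasSum_intervalIntegral_of_summable_norm (a := 0) (b := z) hsum
  have hterm : ∀ n : ℕ, (∫ x in (0:ℝ)..z, F n x)
      = (stirling1 (n + 1) (p + 1) : ℝ) * z ^ (n + 1) / ((n + 1).factorial : ℝ) := by
    intro n
    simp only [hF, ContinuousMap.coe_mk]
    have : ∀ x : ℝ, (stirling1 (n + 1) (p + 1) : ℝ) * x ^ n / (n.factorial : ℝ)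
        = ((stirling1 (n + 1) (p + 1) : ℝ) / (n.factorial : ℝ)) * x ^ n := by
      intro x; ring
    have h2 : ((n+1).factorial : ℝ) = (n+1) * n.factorial := by simp [Nat.factorial_succ]
    rw [intervalIntegral.integral_congr (fun x _ => this x),
      intervalIntegral.integral_const_mul, integral_pow, h2,
      zero_pow (Nat.succ_ne_zero n)]
    have h3 : (n.factorial : ℝ) ≠ 0 := Nat.cast_ne_zero.mpr n.factorial_ne_zero
    have h4 : ((n:ℝ)+1) ≠ 0 := by positivity
    field_simp
    ring
  have hcong : ∀ x ∈ Set.uIcc (0:ℝ) z, (∑' n : ℕ, F n x)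
      = (-Real.log (1 - x)) ^ p / ((p.factorial : ℝ) * (1 - x)) := by
    intro x hx
    exact (hS x (hx1 x hx)).tsum_eq
  have hderiv : ∀ x ∈ Set.uIcc (0:ℝ) z,
      HasDerivAt (fun y => (-Real.log (1 - y)) ^ (p + 1) / (((p+1).factorial : ℝ)))
        ((-Real.log (1 - x)) ^ p / ((p.factorial : ℝ) * (1 - x))) x := by
    intro x hx
    have h0 : (1 - x) ≠ 0 := ne_of_gt (h1x x hx)
    have hd1 : HasDerivAt (fun y : ℝ => -Real.log (1 - y)) ((1 - x)⁻¹) x := by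
      have hinner : HasDerivAt (fun y : ℝ => 1 - y) (-1) x := by
        simpa using (hasDerivAt_id x).const_sub 1
      have := (Real.hasDerivAt_log h0).comp x hinner
      have h2 := this.neg
      exact h2.congr_deriv (by ring)
    have hd2 := (hd1.pow (p + 1)).div_const (((p+1).factorial : ℝ))
    refine hd2.congr_deriv ?_
    symm
    have h2 : ((p+1).factorial : ℝ) = (p+1) * p.factorial := by simp [Nat.factorial_succ]
    have h3 : (p.factorial : ℝ) ≠ 0 := Nat.cast_ne_zero.mpr p.factorial_ne_zero
    have h4 : ((p:ℝ)+1) ≠ 0 := by positivity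
    rw [h2]
    simp only [Nat.add_sub_cancel]
    push_cast
    field_simp
  have hcont : ContinuousOn (fun x : ℝ => (-Real.log (1 - x)) ^ p
      / ((p.factorial : ℝ) * (1 - x))) (Set.uIcc 0 z) := by
    apply ContinuousOn.div
    · exact (((continuousOn_const.sub continuousOn_id).log
        (fun x hx => ne_of_gt (h1x x hx))).neg).pow p
    · exact continuousOn_const.mul (continuousOn_const.sub continuousOn_id)
    · intro x hx
      have := h1x x hx
      have h3 : (p.factorial : ℝ) ≠ 0 := Nat.cast_ne_zero.mpr p.factorial_ne_zero
      positivity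
  have hint : IntervalIntegrable (fun x : ℝ => (-Real.log (1 - x)) ^ p
      / ((p.factorial : ℝ) * (1 - x))) MeasureTheory.volume 0 z :=
    hcont.intervalIntegrable
  have hFTC : (∫ x in (0:ℝ)..z, (-Real.log (1 - x)) ^ p / ((p.factorial : ℝ) * (1 - x)))
      = (-Real.log (1 - z)) ^ (p + 1) / (((p+1).factorial : ℝ)) := by
    rw [intervalIntegral.integral_eq_sub_of_hasDerivAt hderiv hint]
    simp
  rw [intervalIntegral.integral_congr hcong, hFTC, funext hterm] at key
  have h0 : (stirling1 0 (p + 1) : ℝ) * z ^ 0 / ((0).factorial : ℝ) = 0 := by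
    simp [stirling1]
  refine (hasSum_nat_add_iff' 1).mp ?_
  simp only [Finset.range_one, Finset.sum_singleton, h0, sub_zero]
  exact key

/-- The EGF of the unsigned Stirling numbers of the first kind. -/
lemma hasSum_stirling1 : ∀ p : ℕ, ∀ z : ℝ, |z| < 1 →
    HasSum (fun n : ℕ => (stirling1 n p : ℝ) * z ^ n / (n.factorial : ℝ))
      ((-Real.log (1 - z)) ^ p / (p.factorial : ℝ)) := by
  intro p
  induction p with
  | zero =>
      intro z hz
      have h : ∀ n : ℕ, n ≠ 0 → (stirling1 n 0 : ℝ) * z ^ n / (n.factorial : ℝ) = 0 := by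
        intro n hn
        cases n with
        | zero => exact absurd rfl hn
        | succ m => simp [stirling1]
      have := hasSum_single (f := fun n : ℕ =>
        (stirling1 n 0 : ℝ) * z ^ n / (n.factorial : ℝ)) 0 h
      simpa [stirling1] using this
  | succ p ih =>
      exact hasSum_stirling1_integrate p (hasSum_stirling1_shift p ih)

theorem egf_stirling1_shifted (p : ℕ) (z : ℝ) (hz : |z| < 1) :
    HasSum (fun n : ℕ => (stirling1 (n + 1) (p + 1) : ℝ) * z ^ n / (n.factorial : ℝ))
      ((-Real.log (1 - z)) ^ p / ((p.factorial : ℝ) * (1 - z))) :=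
  hasSum_stirling1_shift p (hasSum_stirling1 p) z hz
end

section
/- Let a : ℕ → ℝ and R > 0 be such that the power series F(w) := ∑_{n=0}^∞ a_n w^n converges for all real w with |w| < R. Then for every natural number k and every real z with |z| < R, ∑_{n=0}^∞ n^k · a_n · z^n = ∑_{j=0}^{k} S(k,j) · z^j · F^{(j)}(z), where F^{(j)} denotes the j-th derivative of F. -/
lemma stirling2_eq_zero' : ∀ {n k : ℕ}, n < k → stirling2 n k = 0
  | 0, k + 1, _ => rfl
  | n + 1, k + 1, h => by
      have h1 : n < k + 1 := by omega
      have h2 : n < k := by omega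
      simp [stirling2, stirling2_eq_zero' h1, stirling2_eq_zero' h2]

lemma pow_eq_sum_stirling2' (n k : ℕ) :
    n ^ k = ∑ j ∈ Finset.range (k + 1), stirling2 k j * n.descFactorial j := by
  induction k with
  | zero => simp [stirling2]
  | succ k ih =>
    have key : ∀ j : ℕ, n.descFactorial j * n = n.descFactorial (j + 1) + j * n.descFactorial j := by
      intro j
      rcases le_or_gt j n with h | h
      · rw [Nat.descFactorial_succ]
        have hnj : n - j + j = n := by omega
        calc n.descFactorial j * n = (n - j + j) * n.descFactorial j := by rw [hnj]; ring
          _ = (n - j) * n.descFactorial j + j * n.descFactorial j := by ring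
      · simp [Nat.descFactorial_eq_zero_iff_lt.2 h,
          Nat.descFactorial_eq_zero_iff_lt.2 (by omega : n < j + 1)]
    have shift : ∑ j ∈ Finset.range (k + 1), stirling2 k j * (j * n.descFactorial j)
        = ∑ j ∈ Finset.range (k + 1), (j + 1) * stirling2 k (j + 1) * n.descFactorial (j + 1) := by
      rw [Finset.sum_range_succ' (fun j => stirling2 k j * (j * n.descFactorial j)) k,
        Finset.sum_range_succ (fun j => (j + 1) * stirling2 k (j + 1) * n.descFactorial (j + 1)) k,
        stirling2_eq_zero' (by omega : k < k + 1)]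
      simp [mul_comm, mul_assoc, mul_left_comm]
    calc n ^ (k + 1)
        = (∑ j ∈ Finset.range (k + 1), stirling2 k j * n.descFactorial j) * n := by
          rw [← ih, pow_succ]
      _ = ∑ j ∈ Finset.range (k + 1),
            (stirling2 k j * n.descFactorial (j + 1) + stirling2 k j * (j * n.descFactorial j)) := by
          rw [Finset.sum_mul]
          exact Finset.sum_congr rfl fun j _ => by rw [mul_assoc, key j, Nat.mul_add]
      _ = ∑ j ∈ Finset.range (k + 1),
            (((j + 1) * stirling2 k (j + 1) + stirling2 k j) * n.descFactorial (j + 1)) := by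
          rw [Finset.sum_add_distrib, shift, ← Finset.sum_add_distrib]
          exact Finset.sum_congr rfl fun j _ => by ring
      _ = ∑ j ∈ Finset.range (k + 2), stirling2 (k + 1) j * n.descFactorial j := by
          rw [Finset.sum_range_succ' (fun j => stirling2 (k+1) j * n.descFactorial j) (k+1)]
          simp [stirling2]

lemma sum_aux (a : ℕ → ℝ) (R : ℝ)
    (hconv : ∀ w : ℝ, |w| < R → Summable (fun n : ℕ => a n * w ^ n))
    (m : ℕ) (r : ℝ) (h0 : 0 ≤ r) (hr : r < R) :
    Summable (fun n : ℕ => (n.descFactorial m : ℝ) * |a n| * r ^ (n - m)) := by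
  rcases eq_or_lt_of_le h0 with rfl | hpos
  · apply summable_of_ne_finset_zero (s := Finset.range (m + 1))
    intro n hn
    have hmn : m < n := by
      by_contra h
      exact hn (Finset.mem_range.2 (by omega))
    simp [zero_pow (by omega : n - m ≠ 0)]
  · obtain ⟨ρ, hρ1, hρ2⟩ : ∃ ρ, r < ρ ∧ ρ < R := ⟨(r + R) / 2, by linarith, by linarith⟩
    have hρpos : 0 < ρ := by linarith
    have habs := (hconv ρ (by rw [abs_of_pos hρpos]; linarith)).tendsto_atTop_zero.abs
    rw [abs_zero] at habs
    obtain ⟨C, hC⟩ := habs.bddAbove_range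
    simp only [upperBounds, Set.mem_range, Set.mem_setOf_eq, forall_exists_index] at hC
    have hCb : ∀ n, |a n| * ρ ^ n ≤ C := by
      intro n
      have := hC (a := |a n * ρ ^ n|) n rfl
      rwa [abs_mul, abs_pow, abs_of_pos hρpos] at this
    have hC0 : 0 ≤ C := le_trans (by positivity) (hCb 0)
    have hq : 0 ≤ r / ρ := by positivity
    have hq1 : r / ρ < 1 := (div_lt_one hρpos).2 hρ1
    have hsum : Summable (fun n : ℕ => (C / r ^ m) * ((n : ℝ) ^ m * (r / ρ) ^ n)) :=
      (summable_pow_mul_geometric_of_norm_lt_one (R := ℝ) m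
        (by rwa [Real.norm_eq_abs, abs_of_nonneg hq])).mul_left _
    apply Summable.of_nonneg_of_le _ _ hsum
    · intro n; positivity
    · intro n
      rcases le_or_gt m n with h | h
      · have h1 : (n.descFactorial m : ℝ) ≤ (n : ℝ) ^ m := by
          exact_mod_cast Nat.cast_le.2 (Nat.descFactorial_le_pow n m)
        have h2 : |a n| ≤ C / ρ ^ n := by
          rw [le_div_iff₀ (by positivity)]; exact hCb n
        calc (n.descFactorial m : ℝ) * |a n| * r ^ (n - m)
            ≤ (n : ℝ) ^ m * (C / ρ ^ n) * r ^ (n - m) := by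
              apply mul_le_mul (mul_le_mul h1 h2 (abs_nonneg _) (by positivity)) le_rfl
                (by positivity) (by positivity)
          _ = C / r ^ m * ((n : ℝ) ^ m * (r / ρ) ^ n) := by
              rw [pow_sub₀ r (ne_of_gt hpos) h, div_pow]
              field_simp
      · have hd : n.descFactorial m = 0 := Nat.descFactorial_eq_zero_iff_lt.2 h
        rw [hd]
        simp only [Nat.cast_zero, zero_mul]
        positivity

lemma deriv_aux (a : ℕ → ℝ) (R : ℝ)
    (hconv : ∀ w : ℝ, |w| < R → Summable (fun n : ℕ => a n * w ^ n))
    (F : ℝ → ℝ) (hF : ∀ w : ℝ, F w = ∑' n : ℕ, a n * w ^ n)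
    (r : ℝ) (hr0 : 0 < r) (hrR : r < R) :
    ∀ j : ℕ, ∀ y : ℝ, |y| < r →
      HasSum (fun n : ℕ => (n.descFactorial j : ℝ) * a n * y ^ (n - j))
        (iteratedDeriv j F y) := by
  intro j
  induction j with
  | zero =>
    intro y hy
    have hs := (hconv y (lt_trans hy hrR)).hasSum
    rw [iteratedDeriv_zero, hF]
    simpa using hs
  | succ j ih =>
    intro y hy
    set g : ℕ → ℝ → ℝ := fun n x => (n.descFactorial j : ℝ) * a n * x ^ (n - j) with hg_def
    set g' : ℕ → ℝ → ℝ :=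
      fun n x => (n.descFactorial j : ℝ) * a n * (((n - j : ℕ) : ℝ) * x ^ (n - j - 1)) with hg'_def
    set u : ℕ → ℝ := fun n => (n.descFactorial (j + 1) : ℝ) * |a n| * r ^ (n - (j + 1)) with hu_def
    have hu : Summable u := sum_aux a R hconv (j + 1) r hr0.le hrR
    have hmem : ∀ x : ℝ, x ∈ Metric.ball (0 : ℝ) r ↔ |x| < r := by
      intro x; rw [Metric.mem_ball, Real.dist_eq, sub_zero]
    have hdf : ∀ n : ℕ, ((n.descFactorial (j + 1) : ℕ) : ℝ)
        = ((n - j : ℕ) : ℝ) * (n.descFactorial j : ℝ) := by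
      intro n
      rw [Nat.descFactorial_succ]
      push_cast
      ring
    have hsub : ∀ n : ℕ, n - j - 1 = n - (j + 1) := fun n => by omega
    have hgd : ∀ (n : ℕ), ∀ x ∈ Metric.ball (0 : ℝ) r, HasDerivAt (g n) (g' n x) x := by
      intro n x _
      exact (hasDerivAt_pow (n - j) x).const_mul ((n.descFactorial j : ℝ) * a n)
    have hbound : ∀ n x, x ∈ Metric.ball (0 : ℝ) r → ‖g' n x‖ ≤ u n := by
      intro n x hx
      rw [hmem] at hx
      have h1 : ‖g' n x‖ = (n.descFactorial j : ℝ) * |a n| * (((n - j : ℕ) : ℝ) * |x| ^ (n - j - 1)) := by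
        simp [hg'_def, Real.norm_eq_abs, abs_mul, abs_pow, Nat.abs_cast]
      rw [h1, hu_def]
      simp only
      rw [hdf n, ← hsub n]
      have h2 : |x| ^ (n - j - 1) ≤ r ^ (n - j - 1) :=
        pow_le_pow_left₀ (abs_nonneg x) hx.le _
      calc (n.descFactorial j : ℝ) * |a n| * (((n - j : ℕ) : ℝ) * |x| ^ (n - j - 1))
          ≤ (n.descFactorial j : ℝ) * |a n| * (((n - j : ℕ) : ℝ) * r ^ (n - j - 1)) := by
            apply mul_le_mul le_rfl (mul_le_mul le_rfl h2 (by positivity) (by positivity))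
              (by positivity) (by positivity)
        _ = ((n - j : ℕ) : ℝ) * (n.descFactorial j : ℝ) * |a n| * r ^ (n - j - 1) := by ring
    have hball : y ∈ Metric.ball (0 : ℝ) r := (hmem y).2 hy
    have hdA : HasDerivAt (fun x => ∑' n, g n x) (∑' n, g' n y) y :=
      hasDerivAt_tsum_of_isPreconnected hu Metric.isOpen_ball
        (convex_ball (0:ℝ) r).isPreconnected hgd hbound hball
        (ih y hy).summable hball
    have heq : (fun x => ∑' n, g n x) =ᶠ[nhds y] iteratedDeriv j F :=
      Filter.eventuallyEq_of_mem (Metric.isOpen_ball.mem_nhds hball)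
        (fun x hx => (ih x ((hmem x).1 hx)).tsum_eq)
    have hdB : HasDerivAt (iteratedDeriv j F) (∑' n, g' n y) y :=
      hdA.congr_of_eventuallyEq heq.symm
    have hsum' : Summable (fun n => g' n y) :=
      Summable.of_norm_bounded hu (fun n => hbound n y hball)
    have hfe : (fun n : ℕ => (n.descFactorial (j + 1) : ℝ) * a n * y ^ (n - (j + 1)))
        = fun n => g' n y := by
      funext n
      rw [hg'_def]
      simp only
      rw [hdf n, ← hsub n]
      ring
    rw [iteratedDeriv_succ, hdB.deriv, hfe]
    exact hsum'.hasSum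

theorem polynomial_power_weighted_series (a : ℕ → ℝ) (R : ℝ) (hR : 0 < R)
    (hconv : ∀ w : ℝ, |w| < R → Summable (fun n : ℕ => a n * w ^ n))
    (F : ℝ → ℝ) (hF : ∀ w : ℝ, F w = ∑' n : ℕ, a n * w ^ n)
    (k : ℕ) (z : ℝ) (hz : |z| < R) :
    HasSum (fun n : ℕ => (n : ℝ) ^ k * a n * z ^ n)
      (∑ j ∈ Finset.range (k + 1),
        (stirling2 k j : ℝ) * z ^ j * iteratedDeriv j F z) := by
  set r : ℝ := (|z| + R) / 2 with hr_def
  have hr0 : 0 < r := by have := abs_nonneg z; rw [hr_def]; linarith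
  have hzr : |z| < r := by rw [hr_def]; linarith
  have hrR : r < R := by rw [hr_def]; linarith
  have hkey : ∀ j ∈ Finset.range (k + 1),
      HasSum (fun n : ℕ => (stirling2 k j : ℝ) * z ^ j *
        ((n.descFactorial j : ℝ) * a n * z ^ (n - j)))
        ((stirling2 k j : ℝ) * z ^ j * iteratedDeriv j F z) := by
    intro j _
    exact (deriv_aux a R hconv F hF r hr0 hrR j z hzr).mul_left _
  have htotal := hasSum_sum hkey
  have hfun : (fun n : ℕ => ∑ j ∈ Finset.range (k + 1),
      (stirling2 k j : ℝ) * z ^ j * ((n.descFactorial j : ℝ) * a n * z ^ (n - j)))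
      = fun n : ℕ => (n : ℝ) ^ k * a n * z ^ n := by
    funext n
    have hterm : ∀ j : ℕ, (stirling2 k j : ℝ) * z ^ j *
        ((n.descFactorial j : ℝ) * a n * z ^ (n - j))
        = (stirling2 k j : ℝ) * (n.descFactorial j : ℝ) * (a n * z ^ n) := by
      intro j
      rcases le_or_gt j n with h | h
      · have hzz : z ^ j * z ^ (n - j) = z ^ n := by
          rw [← pow_add]; congr 1; omega
        calc (stirling2 k j : ℝ) * z ^ j * ((n.descFactorial j : ℝ) * a n * z ^ (n - j))
            = (stirling2 k j : ℝ) * (n.descFactorial j : ℝ) * (a n * (z ^ j * z ^ (n - j))) := by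
              ring
          _ = (stirling2 k j : ℝ) * (n.descFactorial j : ℝ) * (a n * z ^ n) := by rw [hzz]
      · rw [Nat.descFactorial_eq_zero_iff_lt.2 h]
        simp
    rw [Finset.sum_congr rfl (fun j _ => hterm j), ← Finset.sum_mul]
    have hcast : ∑ j ∈ Finset.range (k + 1), (stirling2 k j : ℝ) * (n.descFactorial j : ℝ)
        = (n : ℝ) ^ k := by
      have := pow_eq_sum_stirling2' n k
      have h2 : ((n ^ k : ℕ) : ℝ)
          = ((∑ j ∈ Finset.range (k + 1), stirling2 k j * n.descFactorial j : ℕ) : ℝ) := by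
        exact congrArg (fun m : ℕ => (m : ℝ)) this
      push_cast at h2
      rw [← h2]
    rw [hcast]
    ring
  rwa [hfun] at htotal
end

section
/- For all natural numbers j, p and every real z with z < 1, the j-th derivative of the function x ↦ (-1)^p (log(1-x))^p / p! at z equals ∑_{i=0}^{min(j,p)} c(j,i) · ((-1)^{p-i}/(p-i)!) · (log(1-z))^{p-i} / (1-z)^j. -/
lemma stirling1_eq_zero : ∀ n k : ℕ, n < k → stirling1 n k = 0 := by
  intro n
  induction n with
  | zero => intro k hk; cases k with
    | zero => omega
    | succ k => rfl
  | succ n ih =>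
    intro k hk
    cases k with
    | zero => omega
    | succ k =>
      simp [stirling1, ih k (by omega), ih (k+1) (by omega)]

lemma stirling1_succ_zero (j : ℕ) : stirling1 (j+1) 0 = j * stirling1 j 0 := by
  cases j with
  | zero => rfl
  | succ j => rfl

lemma term_hasDerivAt (m j : ℕ) {z : ℝ} (hz : z < 1) :
    HasDerivAt (fun x : ℝ => Real.log (1 - x) ^ m / (1 - x) ^ j)
      ((j * Real.log (1 - z) ^ m - m * Real.log (1 - z) ^ (m - 1)) / (1 - z) ^ (j + 1)) z := by
  have hu : (1 : ℝ) - z ≠ 0 := by linarith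
  have h1 : HasDerivAt (fun x : ℝ => 1 - x) (-1) z := by
    simpa using (hasDerivAt_id z).const_sub 1
  have hlog : HasDerivAt (fun x : ℝ => Real.log (1 - x)) ((1 - z)⁻¹ * (-1)) z :=
    (Real.hasDerivAt_log hu).comp z h1
  have hdiv := (hlog.pow m).div (h1.pow j) (pow_ne_zero j hu)
  refine hdiv.congr_deriv ?_
  rcases j with _ | j
  · simp; field_simp
  · have : ((1:ℝ) - z) ^ (j + 1 - 1) = (1 - z) ^ j := by norm_num
    rw [this]; simp only [Pi.pow_apply]; field_simp; ring

lemma sum_id (p j : ℕ) (L : ℝ) :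
    ∑ i ∈ Finset.range (p+1), (stirling1 j i : ℝ) * ((-1:ℝ)^(p-i)/((p-i).factorial)) *
        ((j : ℝ) * L^(p-i) - ((p-i : ℕ) : ℝ) * L^(p-i-1))
    = ∑ i ∈ Finset.range (p+1), (stirling1 (j+1) i : ℝ) * ((-1:ℝ)^(p-i)/((p-i).factorial)) * L^(p-i) := by
  rw [Finset.sum_range_succ' (fun i => (stirling1 (j+1) i : ℝ) * ((-1:ℝ)^(p-i)/((p-i).factorial)) * L^(p-i))]
  have lhs_split :
      ∑ i ∈ Finset.range (p+1), (stirling1 j i : ℝ) * ((-1:ℝ)^(p-i)/((p-i).factorial)) *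
          ((j : ℝ) * L^(p-i) - ((p-i : ℕ) : ℝ) * L^(p-i-1))
      = (j : ℝ) * ∑ i ∈ Finset.range (p+1), (stirling1 j i : ℝ) * ((-1:ℝ)^(p-i)/((p-i).factorial)) * L^(p-i)
        - ∑ i ∈ Finset.range (p+1), (stirling1 j i : ℝ) * ((-1:ℝ)^(p-i)/((p-i).factorial)) *
            (((p-i : ℕ) : ℝ) * L^(p-i-1)) := by
    rw [Finset.mul_sum, ← Finset.sum_sub_distrib]
    exact Finset.sum_congr rfl fun i _ => by ring
  rw [lhs_split]
  have h2 :
      ∑ i ∈ Finset.range (p+1), (stirling1 j i : ℝ) * ((-1:ℝ)^(p-i)/((p-i).factorial)) *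
          (((p-i : ℕ) : ℝ) * L^(p-i-1))
      = - ∑ i ∈ Finset.range p, (stirling1 j i : ℝ) * ((-1:ℝ)^(p-(i+1))/((p-(i+1)).factorial)) * L^(p-(i+1)) := by
    rw [Finset.sum_range_succ]
    simp only [Nat.sub_self, Nat.cast_zero, zero_mul, mul_zero, add_zero]
    rw [← Finset.sum_neg_distrib]
    refine Finset.sum_congr rfl fun i hi => ?_
    have hip : i < p := Finset.mem_range.mp hi
    have hm : p - i = (p - (i+1)) + 1 := by omega
    have hm2 : p - i - 1 = p - (i + 1) := by omega
    rw [hm2, hm]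
    set m := p - (i + 1)
    rw [pow_succ, Nat.factorial_succ]
    push_cast
    have : (m.factorial : ℝ) ≠ 0 := Nat.cast_ne_zero.mpr m.factorial_ne_zero
    field_simp
  rw [h2]
  rw [Finset.sum_range_succ' (fun i => (stirling1 j i : ℝ) * ((-1:ℝ)^(p-i)/((p-i).factorial)) * L^(p-i))]
  have hrec : ∀ i, (stirling1 (j+1) (i+1) : ℝ) = j * stirling1 j (i+1) + stirling1 j i := by
    intro i; rw [show stirling1 (j+1) (i+1) = j * stirling1 j (i+1) + stirling1 j i from rfl]
    push_cast; ring
  have hzero : (stirling1 (j+1) 0 : ℝ) = j * stirling1 j 0 := by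
    rw [stirling1_succ_zero]; push_cast; ring
  rw [mul_add, Finset.mul_sum, sub_neg_eq_add, add_assoc,
    add_comm (↑j * (↑(stirling1 j 0) * ((-1:ℝ) ^ (p - 0) / ↑(p - 0).factorial) * L ^ (p - 0))),
    ← add_assoc, ← Finset.sum_add_distrib, hzero]
  congr 1
  · refine Finset.sum_congr rfl fun i _ => ?_
    rw [hrec]; ring
  · ring

/-- The extended sum `G j z` (over `range (p+1)`). -/
noncomputable def G (p j : ℕ) (z : ℝ) : ℝ :=
  ∑ i ∈ Finset.range (p+1),
    (stirling1 j i : ℝ) * ((-1:ℝ)^(p-i)/((p-i).factorial : ℝ)) * Real.log (1-z)^(p-i) / (1-z)^j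

lemma G_hasDerivAt (p j : ℕ) {z : ℝ} (hz : z < 1) :
    HasDerivAt (G p j) (G p (j+1) z) z := by
  have h : HasDerivAt (G p j)
      (∑ i ∈ Finset.range (p+1),
        (stirling1 j i : ℝ) * ((-1:ℝ)^(p-i)/((p-i).factorial : ℝ)) *
          (((j:ℝ) * Real.log (1-z)^(p-i) - ((p-i : ℕ):ℝ) * Real.log (1-z)^(p-i-1)) / (1-z)^(j+1))) z := by
    refine HasDerivAt.fun_sum fun i _ => ?_
    have := ((term_hasDerivAt (p-i) j hz).const_mul
      ((stirling1 j i : ℝ) * ((-1:ℝ)^(p-i)/((p-i).factorial : ℝ))))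
    convert this using 2 with x
    · rfl
    ring
  convert h using 1
  unfold G
  have e1 : ∀ i ∈ Finset.range (p+1),
      (stirling1 j i : ℝ) * ((-1:ℝ)^(p-i)/((p-i).factorial : ℝ)) *
        (((j:ℝ) * Real.log (1-z)^(p-i) - ((p-i : ℕ):ℝ) * Real.log (1-z)^(p-i-1)) / (1-z)^(j+1))
      = ((stirling1 j i : ℝ) * ((-1:ℝ)^(p-i)/((p-i).factorial : ℝ)) *
        ((j:ℝ) * Real.log (1-z)^(p-i) - ((p-i : ℕ):ℝ) * Real.log (1-z)^(p-i-1))) / (1-z)^(j+1) :=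
    fun i _ => by ring
  rw [Finset.sum_congr rfl e1, ← Finset.sum_div, ← Finset.sum_div, sum_id p j (Real.log (1-z))]

theorem iteratedDeriv_log_pow (j p : ℕ) (z : ℝ) (hz : z < 1) :
    iteratedDeriv j (fun x : ℝ => (-1 : ℝ) ^ p * Real.log (1 - x) ^ p / (p.factorial : ℝ)) z =
      ∑ i ∈ Finset.range (min j p + 1),
        (stirling1 j i : ℝ) * ((-1 : ℝ) ^ (p - i) / ((p - i).factorial : ℝ)) *
          Real.log (1 - z) ^ (p - i) / (1 - z) ^ j := by
  have key : ∀ (j : ℕ) (z : ℝ), z < 1 →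
      iteratedDeriv j (fun x : ℝ => (-1 : ℝ) ^ p * Real.log (1 - x) ^ p / (p.factorial : ℝ)) z
        = G p j z := by
    intro j
    induction j with
    | zero =>
      intro z hz
      rw [iteratedDeriv_zero]
      unfold G
      rw [Finset.sum_range_succ' (fun i => (stirling1 0 i : ℝ) * ((-1:ℝ)^(p-i)/((p-i).factorial : ℝ)) * Real.log (1-z)^(p-i) / (1-z)^0)]
      have : ∀ i ∈ Finset.range p, (stirling1 0 (i+1) : ℝ) * ((-1:ℝ)^(p-(i+1))/((p-(i+1)).factorial : ℝ)) * Real.log (1-z)^(p-(i+1)) / (1-z)^0 = 0 := by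
        intro i _
        have : stirling1 0 (i+1) = 0 := rfl
        rw [this]; push_cast; ring
      rw [Finset.sum_congr rfl this, Finset.sum_const_zero]
      show (-1 : ℝ) ^ p * Real.log (1 - z) ^ p / (p.factorial : ℝ) = _
      have : stirling1 0 0 = 1 := rfl
      rw [this]
      simp
      ring
    | succ j ih =>
      intro z hz
      rw [iteratedDeriv_succ]
      have hev : iteratedDeriv j (fun x : ℝ => (-1 : ℝ) ^ p * Real.log (1 - x) ^ p / (p.factorial : ℝ))
          =ᶠ[nhds z] G p j := by
        filter_upwards [isOpen_Iio.mem_nhds (show z ∈ Set.Iio 1 from hz)] with x hx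
        exact ih x hx
      rw [hev.deriv_eq, (G_hasDerivAt p j hz).deriv]
  rw [key j z hz]
  unfold G
  symm
  apply Finset.sum_subset
  · intro i hi
    simp only [Finset.mem_range] at hi ⊢
    omega
  · intro i hi hni
    simp only [Finset.mem_range] at hi hni
    have : j < i := by omega
    rw [stirling1_eq_zero j i this]
    push_cast; ring
end

section
/- For all natural numbers j, p and every real z with z < 1, the j-th derivative of the function x ↦ (-1)^p (log(1-x))^p / (p!·(1-x)) at z equals ∑_{i=max(0,j-p)}^{j} c(j+1, j+1-i) · ((-1)^{p+j-i}/(1-z)^{j+1}) · (log(1-z))^{p-j+i} / (p-j+i)!. -/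
lemma stirling1_of_lt : ∀ {n k : ℕ}, n < k → stirling1 n k = 0 := by
  intro n
  induction n with
  | zero => intro k h; cases k with
    | zero => omega
    | succ k => rfl
  | succ n ih =>
    intro k h
    cases k with
    | zero => omega
    | succ k =>
      simp only [stirling1, ih (by omega : n < k + 1), ih (by omega : n < k), mul_zero]

noncomputable def Sfun (p j : ℕ) (z : ℝ) : ℝ :=
  ∑ k ∈ Finset.range (p+1),
    (stirling1 (j+1) (k+1) : ℝ) * ((-1:ℝ)^(p+k) / (1-z)^(j+1)) *
      Real.log (1-z) ^ (p-k) / ((p-k).factorial : ℝ)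

-- derivative of a single term
lemma hasDerivAt_term (j m : ℕ) (C : ℝ) {z : ℝ} (hz : z < 1) :
    HasDerivAt (fun x : ℝ => C * (((1-x)^(j+1))⁻¹ * Real.log (1-x) ^ m))
      (C * (((j+1) * Real.log (1-z)^m - m * Real.log (1-z)^(m-1)) / (1-z)^(j+2))) z := by
  have hw : (0:ℝ) < 1 - z := by linarith
  have h1 : HasDerivAt (fun x : ℝ => 1 - x) (-1) z := (hasDerivAt_id z).const_sub 1
  have hlog : HasDerivAt (fun x : ℝ => Real.log (1 - x)) ((1-z)⁻¹ * -1) z :=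
    (Real.hasDerivAt_log hw.ne').comp z h1
  have hv := hlog.fun_pow m
  have hu := h1.fun_pow (j+1)
  have huinv := hu.fun_inv (pow_ne_zero _ hw.ne')
  have h := (huinv.fun_mul hv).const_mul C
  refine h.congr_deriv ?_
  have hne : (1-z) ≠ 0 := hw.ne'
  simp only [Nat.add_sub_cancel, Nat.cast_add, Nat.cast_one]
  field_simp
  ring

lemma hasDerivAt_Sfun (p j : ℕ) {z : ℝ} (hz : z < 1) :
    HasDerivAt (Sfun p j) (Sfun p (j+1) z) z := by
  have hw : (0:ℝ) < 1 - z := by linarith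
  set L := Real.log (1-z) with hL
  set C : ℕ → ℝ := fun k => (stirling1 (j+1) (k+1) : ℝ) * (-1:ℝ)^(p+k) / ((p-k).factorial : ℝ)
    with hC
  set D : ℕ → ℝ := fun k =>
      C k * (((j+1) * L^(p-k) - ((p-k : ℕ) : ℝ) * L^(p-k-1)) / (1-z)^(j+2)) with hD
  have hsum : HasDerivAt
      (fun x => ∑ k ∈ Finset.range (p+1), C k * (((1-x)^(j+1))⁻¹ * Real.log (1-x) ^ (p-k)))
      (∑ k ∈ Finset.range (p+1), D k) z :=
    HasDerivAt.fun_sum (fun k _ => hasDerivAt_term j (p-k) (C k) hz)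
  have heq : HasDerivAt (Sfun p j) (∑ k ∈ Finset.range (p+1), D k) z := by
    apply hsum.congr_of_eventuallyEq
    apply Filter.Eventually.of_forall
    intro x
    unfold Sfun
    refine Finset.sum_congr rfl fun k _ => ?_
    rw [hC]
    ring
  have key : (∑ k ∈ Finset.range (p+1), D k) = Sfun p (j+1) z := by
    unfold Sfun
    have step : ∀ k ∈ Finset.range (p+1),
        (stirling1 (j+1+1) (k+1) : ℝ) * ((-1:ℝ)^(p+k) / (1-z)^(j+1+1)) * L^(p-k) /
            ((p-k).factorial : ℝ)
          = (j+1) * ((stirling1 (j+1) (k+1) : ℝ) * ((-1:ℝ)^(p+k) / (1-z)^(j+2)) * L^(p-k) /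
              ((p-k).factorial : ℝ))
            + (stirling1 (j+1) k : ℝ) * ((-1:ℝ)^(p+k) / (1-z)^(j+2)) * L^(p-k) /
              ((p-k).factorial : ℝ) := by
      intro k _
      have h : stirling1 (j+1+1) (k+1) = (j+1) * stirling1 (j+1) (k+1) + stirling1 (j+1) k := rfl
      rw [h]
      push_cast
      ring
    rw [Finset.sum_congr rfl step, Finset.sum_add_distrib]
    have stepD : ∀ k ∈ Finset.range (p+1),
        D k = (j+1) * ((stirling1 (j+1) (k+1) : ℝ) * ((-1:ℝ)^(p+k) / (1-z)^(j+2)) * L^(p-k) /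
              ((p-k).factorial : ℝ))
          + -((stirling1 (j+1) (k+1) : ℝ) * (-1:ℝ)^(p+k) * ((p-k : ℕ) : ℝ) * L^(p-k-1) /
              (((p-k).factorial : ℝ) * (1-z)^(j+2))) := by
      intro k _
      have hfac : (((p-k).factorial : ℝ)) ≠ 0 := Nat.cast_ne_zero.mpr (p-k).factorial_ne_zero
      have hne : (1-z) ≠ 0 := hw.ne'
      rw [hD, hC]
      field_simp
      ring
    rw [Finset.sum_congr rfl stepD, Finset.sum_add_distrib]
    congr 1
    -- remaining: ∑ Q k = ∑ R k
    rw [Finset.sum_range_succ, Finset.sum_range_succ']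
    have hQp : -((stirling1 (j+1) (p+1) : ℝ) * (-1:ℝ)^(p+p) * ((p-p : ℕ) : ℝ) * L^(p-p-1) /
        (((p-p).factorial : ℝ) * (1-z)^(j+2))) = 0 := by
      simp
    have hR0 : (stirling1 (j+1) 0 : ℝ) * ((-1:ℝ)^(p+0) / (1-z)^(j+2)) * L^(p-0) /
        ((p-0).factorial : ℝ) = 0 := by
      have : stirling1 (j+1) 0 = 0 := rfl
      rw [this]
      simp
    rw [hQp, hR0, add_zero, add_zero]
    refine Finset.sum_congr rfl fun k hk => ?_
    have hk' : k < p := Finset.mem_range.mp hk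
    obtain ⟨m, hm⟩ : ∃ m, p - k = m + 1 := ⟨p - k - 1, by omega⟩
    have h1 : p - (k+1) = m := by omega
    have h2 : p - k - 1 = m := by omega
    rw [h2, h1, hm, Nat.factorial_succ]
    have hfac : ((m.factorial : ℝ)) ≠ 0 := Nat.cast_ne_zero.mpr m.factorial_ne_zero
    push_cast
    field_simp
    ring
  rw [← key]
  exact heq

lemma Sfun_zero (p : ℕ) (z : ℝ) (hz : z < 1) :
    Sfun p 0 z = (-1:ℝ)^p * Real.log (1-z)^p / ((p.factorial : ℝ) * (1-z)) := by
  have hne : (1-z) ≠ 0 := by intro h; rw [sub_eq_zero] at h; exact absurd h.symm hz.ne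
  have hfac : ((p.factorial : ℝ)) ≠ 0 := Nat.cast_ne_zero.mpr p.factorial_ne_zero
  unfold Sfun
  rw [Finset.sum_eq_single_of_mem 0 (Finset.mem_range.mpr (Nat.succ_pos p))]
  · have h : stirling1 (0+1) (0+1) = 1 := rfl
    rw [h]
    simp only [Nat.sub_zero, pow_one, add_zero, Nat.cast_one]
    field_simp
    ring
  · intro k _ hk
    have h : stirling1 (0+1) (k+1) = 0 := by
      rw [stirling1_of_lt (by omega)]
    rw [h]
    simp

lemma Icc_sum_eq_Sfun (p j : ℕ) (z : ℝ) :
    (∑ i ∈ Finset.Icc (j - p) j,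
        (stirling1 (j + 1) (j + 1 - i) : ℝ) *
          ((-1 : ℝ) ^ (p + j - i) / (1 - z) ^ (j + 1)) *
            Real.log (1 - z) ^ (p + i - j) / ((p + i - j).factorial : ℝ)) = Sfun p j z := by
  unfold Sfun
  rw [show Finset.range (p+1) = Finset.Icc 0 p by rw [Finset.range_eq_Ico, Nat.Ico_zero_eq_range]; ext x; simp]
  rw [← Finset.sum_subset (Finset.filter_subset (· ≤ j) (Finset.Icc 0 p))]
  · refine Finset.sum_nbij' (fun i => j - i) (fun k => j - k) ?_ ?_ ?_ ?_ ?_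
    · intro a ha
      simp only [Finset.mem_Icc, Finset.mem_filter] at ha ⊢
      omega
    · intro a ha
      simp only [Finset.mem_Icc, Finset.mem_filter] at ha ⊢
      omega
    · intro a ha
      simp only [Finset.mem_Icc] at ha
      show j - (j - a) = a
      omega
    · intro a ha
      simp only [Finset.mem_Icc, Finset.mem_filter] at ha
      show j - (j - a) = a
      omega
    · intro a ha
      simp only [Finset.mem_Icc] at ha
      have h1 : j - a + 1 = j + 1 - a := by omega
      have h2 : p + (j - a) = p + j - a := by omega
      have h3 : p - (j - a) = p + a - j := by omega
      rw [h1, h2, h3]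
  · intro x hx hx'
    simp only [Finset.mem_Icc, Finset.mem_filter, not_and, not_le] at hx hx'
    have h : stirling1 (j+1) (x+1) = 0 := stirling1_of_lt (by omega)
    rw [h]
    simp

theorem iteratedDeriv_log_pow_over_one_sub (j p : ℕ) (z : ℝ) (hz : z < 1) :
    iteratedDeriv j
        (fun x : ℝ => (-1 : ℝ) ^ p * Real.log (1 - x) ^ p / ((p.factorial : ℝ) * (1 - x))) z =
      ∑ i ∈ Finset.Icc (j - p) j,
        (stirling1 (j + 1) (j + 1 - i) : ℝ) *
          ((-1 : ℝ) ^ (p + j - i) / (1 - z) ^ (j + 1)) *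
            Real.log (1 - z) ^ (p + i - j) / ((p + i - j).factorial : ℝ) := by
  rw [Icc_sum_eq_Sfun]
  induction j generalizing z with
  | zero =>
    rw [iteratedDeriv_zero, Sfun_zero p z hz]
  | succ j ih =>
    rw [iteratedDeriv_succ]
    have hev : iteratedDeriv j
        (fun x : ℝ => (-1 : ℝ) ^ p * Real.log (1 - x) ^ p / ((p.factorial : ℝ) * (1 - x)))
        =ᶠ[nhds z] Sfun p j := by
      filter_upwards [Iio_mem_nhds hz] with x hx
      exact ih x hx
    rw [hev.deriv_eq, (hasDerivAt_Sfun p j hz).deriv]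
end

section
/- Let d ≥ 1 be a natural number and let F = ∑_{n≥0} f_n X^n be a formal power series with real coefficients. Then the formal power series ∑_{n≥0} ((n+d)!/n!) · f_n · X^n equals ∑_{i=0}^{d} C(d,i)^2 · (d-i)! · X^i · F^{(i)}, where F^{(i)} denotes the i-th formal derivative of F. -/
open PowerSeries

lemma coeff_iter_deriv (F : PowerSeries ℝ) (i m : ℕ) :
    coeff m ((⇑(derivative ℝ))^[i] F) =
      ((m + i).descFactorial i : ℝ) * coeff (m + i) F := by
  induction i generalizing m with
  | zero => simp
  | succ i ih =>
    rw [Function.iterate_succ_apply', coeff_derivative, ih,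
      show m + 1 + i = m + (i + 1) by omega, Nat.descFactorial_succ,
      show m + (i + 1) - i = m + 1 by omega]
    push_cast
    ring

lemma key_nat (d n : ℕ) :
    ∑ i ∈ Finset.range (d + 1),
      d.choose i ^ 2 * (d - i).factorial * n.descFactorial i
      = (n + d).descFactorial d := by
  have h1 : ∀ i ∈ Finset.range (d + 1),
      d.choose i ^ 2 * (d - i).factorial * n.descFactorial i
        = d.factorial * (n.choose i * d.choose i) := by
    intro i hi
    rw [Finset.mem_range] at hi
    have hid : i ≤ d := Nat.lt_succ_iff.mp hi
    rw [Nat.descFactorial_eq_factorial_mul_choose]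
    have := Nat.choose_mul_factorial_mul_factorial hid
    calc d.choose i ^ 2 * (d - i).factorial * (i.factorial * n.choose i)
        = (d.choose i * i.factorial * (d - i).factorial) * (n.choose i * d.choose i) := by ring
      _ = d.factorial * (n.choose i * d.choose i) := by
          rw [Nat.choose_mul_factorial_mul_factorial hid]
  rw [Finset.sum_congr rfl h1, ← Finset.mul_sum,
    Nat.descFactorial_eq_factorial_mul_choose]
  congr 1
  rw [Nat.add_choose_eq, Finset.Nat.sum_antidiagonal_eq_sum_range_succ
    (f := fun a b => n.choose a * d.choose b)]
  refine Finset.sum_congr rfl fun i hi => ?_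
  rw [Finset.mem_range] at hi
  rw [Nat.choose_symm (Nat.lt_succ_iff.mp hi)]


open PowerSeries in
theorem powerSeries_deriv_identity (d : ℕ) (hd : 1 ≤ d) (F : PowerSeries ℝ) :
    PowerSeries.mk (fun n : ℕ =>
        (((n + d).factorial : ℝ) / (n.factorial : ℝ)) * PowerSeries.coeff (R := ℝ) n F) =
      ∑ i ∈ Finset.range (d + 1),
        PowerSeries.C (R := ℝ) ((d.choose i : ℝ) ^ 2 * ((d - i).factorial : ℝ)) *
          PowerSeries.X ^ i * (⇑(PowerSeries.derivative ℝ))^[i] F := by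
  ext n
  rw [coeff_mk, map_sum]
  have hL : (((n + d).factorial : ℝ) / (n.factorial : ℝ)) = ((n + d).descFactorial d : ℝ) := by
    rw [div_eq_iff (by positivity), ← Nat.cast_mul]
    norm_cast
    have h := Nat.choose_mul_factorial_mul_factorial (Nat.le_add_left d n)
    rw [Nat.add_sub_cancel] at h
    rw [Nat.descFactorial_eq_factorial_mul_choose, ← h]
    ring
  have hR : ∀ i ∈ Finset.range (d + 1),
      coeff n (PowerSeries.C (R := ℝ) ((d.choose i : ℝ) ^ 2 * ((d - i).factorial : ℝ)) *
          PowerSeries.X ^ i * (⇑(PowerSeries.derivative ℝ))^[i] F)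
        = ((d.choose i ^ 2 * (d - i).factorial * n.descFactorial i : ℕ) : ℝ) * coeff n F := by
    intro i hi
    rw [mul_assoc, coeff_C_mul, coeff_X_pow_mul']
    split_ifs with h
    · rw [coeff_iter_deriv, Nat.sub_add_cancel h]
      push_cast
      ring
    · have : n.descFactorial i = 0 := by
        apply Nat.descFactorial_eq_zero_iff_lt.mpr
        omega
      rw [this]
      push_cast
      ring
  rw [Finset.sum_congr rfl hR, ← Finset.sum_mul, hL, ← Nat.cast_sum, key_nat]
end

section
/- For every natural number p ≥ 1 and every real z with |z| < 1, ∑_{n=0}^∞ n^p · z^n = (1/(1-z)^{p+1}) · ∑_{i=0}^{p-1} A(p,i) · z^{i+1}. -/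
lemma eulerian_zero : ∀ n, eulerian n 0 = 1
  | 0 => rfl
  | n + 1 => by rw [eulerian, eulerian_zero n]

lemma eulerian_vanish : ∀ n m, 1 ≤ n → n ≤ m → eulerian n m = 0 := by
  intro n
  induction n with
  | zero => omega
  | succ n ih =>
    intro m h1 h2
    match m, h2 with
    | m + 1, h2 =>
      rw [eulerian]
      rcases Nat.eq_zero_or_pos n with h | h
      · subst h
        simp [eulerian, Nat.zero_sub]
      · rw [ih (m+1) h (by omega), ih m h (by omega)]
        simp

lemma eulerian_symm : ∀ n m, m < n → eulerian n m = eulerian n (n - 1 - m) := by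
  intro n
  induction n with
  | zero => omega
  | succ n ih =>
    intro m hm
    rcases Nat.eq_zero_or_pos n with hn | hn
    · subst hn; interval_cases m; rfl
    match m with
    | 0 =>
      simp only [Nat.succ_sub_one, Nat.sub_zero, eulerian_zero]
      obtain ⟨k, hk⟩ : ∃ k, n = k + 1 := ⟨n - 1, by omega⟩
      subst hk
      rw [eulerian, eulerian_vanish (k+1) (k+1) (by omega) le_rfl,
        show k + 1 - k = 1 by omega, ih k (by omega), show k+1-1-k = 0 by omega,
        eulerian_zero]
      ring
    | m + 1 =>
      rcases Nat.lt_or_ge (m + 1) n with hlt | hge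
      · obtain ⟨k, hk⟩ : ∃ k, n - m - 1 = k + 1 := ⟨n - m - 2, by omega⟩
        rw [show n + 1 - 1 - (m + 1) = k + 1 by omega]
        rw [eulerian, eulerian]
        rw [ih (m+1) hlt, ih m (by omega)]
        rw [show n - 1 - (m+1) = k by omega, show n - 1 - m = k + 1 by omega,
          show n - k = m + 2 by omega, show k + 2 = n - m by omega]
        ring
      · have hmn : m + 1 = n := by omega
        subst hmn
        rw [show m + 1 + 1 - 1 - (m + 1) = 0 by omega, eulerian_zero]
        rw [eulerian, eulerian_vanish (m+1) (m+1) (by omega) le_rfl,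
          show m + 1 - m = 1 by omega, ih m (by omega),
          show m + 1 - 1 - m = 0 by omega, eulerian_zero]
        ring

lemma choose_aux (m p : ℕ) :
    ((p:ℝ)+1) * (m.choose (p+1)) = ((m:ℝ) - p) * (m.choose p) := by
  rcases Nat.lt_or_ge m p with h | h
  · rw [Nat.choose_eq_zero_of_lt (by omega), Nat.choose_eq_zero_of_lt h]; simp
  · have h1 := congrArg (Nat.cast : ℕ → ℝ) (Nat.choose_succ_right_eq m p)
    push_cast [Nat.cast_sub h] at h1
    linarith

lemma key (x k p : ℕ) :
    (x:ℝ) * ((x+k).choose p) =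
      ((k:ℝ)+1) * ((x+k).choose (p+1)) + ((p:ℝ)-k) * ((x+k+1).choose (p+1)) := by
  have pas : ((x+k+1).choose (p+1) : ℝ) = (x+k).choose (p+1) + (x+k).choose p := by
    rw [Nat.choose_succ_succ']; push_cast; ring
  have a1 := choose_aux (x+k) p
  have hp1 : ((p:ℝ)+1) ≠ 0 := by positivity
  field_simp at a1 ⊢
  rw [pas]
  push_cast at a1 ⊢
  nlinarith [a1]

lemma worpitzky : ∀ p, 1 ≤ p → ∀ n : ℕ,
    (n:ℝ)^p = ∑ i ∈ Finset.range p, (eulerian p i : ℝ) * ((n+i).choose p) := by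
  intro p
  induction p with
  | zero => omega
  | succ p ih =>
    intro _ n
    rcases Nat.eq_zero_or_pos p with hp | hp
    · subst hp
      simp [eulerian_zero]
    have h1 : (n:ℝ)^(p+1) =
        (∑ i ∈ Finset.range p, ((i:ℝ)+1) * (eulerian p i : ℝ) * ((n+i).choose (p+1)))
        + ∑ i ∈ Finset.range p, ((p:ℝ)-i) * (eulerian p i : ℝ) * ((n+i+1).choose (p+1)) := by
      rw [pow_succ, ih hp n, Finset.sum_mul, ← Finset.sum_add_distrib]
      apply Finset.sum_congr rfl
      intro i _
      rw [mul_comm ((eulerian p i : ℝ) * _) (n:ℝ), ← mul_assoc, mul_comm (n:ℝ) _, mul_assoc,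
        key n i p]
      ring
    have h2 : ∑ i ∈ Finset.range p, ((i:ℝ)+1) * (eulerian p i : ℝ) * ((n+i).choose (p+1))
        = (∑ i ∈ Finset.range p, ((i:ℝ)+2) * (eulerian p (i+1) : ℝ) * ((n+i+1).choose (p+1)))
          + ((n.choose (p+1) : ℝ)) := by
      have hz : (((p:ℝ))+1) * (eulerian p p : ℝ) * ((n+p).choose (p+1)) = 0 := by
        rw [eulerian_vanish p p hp le_rfl]; simp
      rw [show (∑ i ∈ Finset.range p, ((i:ℝ)+1) * (eulerian p i : ℝ) * ((n+i).choose (p+1)))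
          = ∑ i ∈ Finset.range (p+1), ((i:ℝ)+1) * (eulerian p i : ℝ) * ((n+i).choose (p+1)) by
        rw [Finset.sum_range_succ, hz, add_zero]]
      rw [Finset.sum_range_succ']
      simp only [eulerian_zero, Nat.cast_one, ← add_assoc, Nat.add_zero, one_mul]
      congr 1
      · apply Finset.sum_congr rfl
        intro i _
        push_cast
        ring
      · norm_num
    rw [h1, h2, Finset.sum_range_succ']
    simp only [eulerian_zero]
    have h3 : ∀ i ∈ Finset.range p, (eulerian (p+1) (i+1) : ℝ) * ((n+(i+1)).choose (p+1))
        = (((i:ℝ)+2) * (eulerian p (i+1) : ℝ) + ((p:ℝ)-i) * (eulerian p i : ℝ))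
            * ((n+i+1).choose (p+1)) := by
      intro i hi
      simp only [Finset.mem_range] at hi
      rw [show eulerian (p+1) (i+1) = (i+2) * eulerian p (i+1) + (p-i) * eulerian p i from rfl]
      push_cast [Nat.cast_sub hi.le]
      ring_nf
    rw [Finset.sum_congr rfl h3]
    simp only [add_mul, Finset.sum_add_distrib, Nat.add_zero, Nat.cast_one, one_mul]
    push_cast
    ring

lemma hshift (p : ℕ) (z : ℝ) (hz : |z| < 1) (i : ℕ) (hi : i < p) :
    HasSum (fun n : ℕ => (((n + i).choose p : ℕ) : ℝ) * z ^ n)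
      (z ^ (p - i) / (1 - z) ^ (p + 1)) := by
  have hz' : ‖z‖ < 1 := by rwa [Real.norm_eq_abs]
  have base := hasSum_choose_mul_geometric_of_norm_lt_one (𝕜 := ℝ) p hz'
  set d := p - i with hd
  have h1 : (fun n : ℕ => (((n + d + i).choose p : ℕ) : ℝ) * z ^ (n + d))
      = fun n : ℕ => z ^ d * ((((n + p).choose p : ℕ) : ℝ) * z ^ n) := by
    funext n
    rw [show n + d + i = n + p by omega, pow_add]
    ring
  have h2 : HasSum (fun n : ℕ => (((n + d + i).choose p : ℕ) : ℝ) * z ^ (n + d))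
      (z ^ d * (1 / (1 - z) ^ (p + 1))) := by
    rw [h1]; exact base.mul_left _
  have h3 := (hasSum_nat_add_iff (f := fun n : ℕ => (((n + i).choose p : ℕ) : ℝ) * z ^ n) d).1 h2
  have h4 : ∑ n ∈ Finset.range d, (((n + i).choose p : ℕ) : ℝ) * z ^ n = 0 := by
    apply Finset.sum_eq_zero
    intro n hn
    simp only [Finset.mem_range] at hn
    rw [Nat.choose_eq_zero_of_lt (by omega)]
    simp
  rw [h4, add_zero] at h3
  convert h3 using 1
  · rfl
  ring

theorem ogf_poly_powers_eulerian (p : ℕ) (hp : 1 ≤ p) (z : ℝ) (hz : |z| < 1) :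
    HasSum (fun n : ℕ => (n : ℝ) ^ p * z ^ n)
      (1 / (1 - z) ^ (p + 1) *
        ∑ i ∈ Finset.range p, (eulerian p i : ℝ) * z ^ (i + 1)) := by
  have H := hasSum_sum (s := Finset.range p)
    (f := fun (i : ℕ) (n : ℕ) => (eulerian p i : ℝ) * ((((n + i).choose p : ℕ) : ℝ) * z ^ n))
    (a := fun i => (eulerian p i : ℝ) * (z ^ (p - i) / (1 - z) ^ (p + 1)))
    (fun i hi => (hshift p z hz i (Finset.mem_range.1 hi)).mul_left _)
  have hfun : (fun n : ℕ => ∑ i ∈ Finset.range p,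
      (eulerian p i : ℝ) * ((((n + i).choose p : ℕ) : ℝ) * z ^ n))
      = fun n : ℕ => (n : ℝ) ^ p * z ^ n := by
    funext n
    rw [worpitzky p hp n, Finset.sum_mul]
    apply Finset.sum_congr rfl
    intro i _
    ring
  rw [hfun] at H
  have hre : ∑ i ∈ Finset.range p, (eulerian p i : ℝ) * (z ^ (p - i) / (1 - z) ^ (p + 1))
      = 1 / (1 - z) ^ (p + 1) * ∑ i ∈ Finset.range p, (eulerian p i : ℝ) * z ^ (i + 1) := by
    rw [Finset.mul_sum,
      ← Finset.sum_range_reflect (fun i => 1 / (1 - z) ^ (p + 1) * ((eulerian p i : ℝ) * z ^ (i + 1))) p]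
    apply Finset.sum_congr rfl
    intro i hi
    simp only [Finset.mem_range] at hi
    rw [show p - 1 - i + 1 = p - i by omega, ← eulerian_symm p i hi]
    ring
  rwa [hre] at H
end

section
/- For each natural number n define the polynomial S_n(z) := ∑_{k=0}^{n} C(n,k)^2 · z^k with rational coefficients. Then for every natural number n the three-term recurrence (n+1)·(1-z)^2·S_n(z) - (2n+3)·(z+1)·S_{n+1}(z) + (n+2)·S_{n+2}(z) = 0 holds as an identity in ℚ[z]. -/
open Polynomial Finset

lemma keyaux (n j : ℕ) :
    (n : ℚ) * (n.choose (j+1) : ℚ)^2 =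
      (n.choose (j+1) : ℚ) * ((n.choose (j+2) : ℚ) + (n.choose j : ℚ)) +
        ((n : ℚ) + 2) * (n.choose (j+2) : ℚ) * (n.choose j : ℚ) := by
  rcases le_or_gt (j+1) n with h | h
  · obtain ⟨d, rfl⟩ := Nat.exists_eq_add_of_le h
    have h1n : (j+1+d).choose (j+2) * (j+2) = (j+1+d).choose (j+1) * d := by
      have := Nat.choose_succ_right_eq (j+1+d) (j+1)
      rw [show j+1+d-(j+1) = d from by omega] at this
      simpa using this
    have h2n : (j+1+d).choose (j+1) * (j+1) = (j+1+d).choose j * (d+1) := by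
      have := Nat.choose_succ_right_eq (j+1+d) j
      rw [show j+1+d-j = d+1 from by omega] at this
      simpa using this
    have hD : ((j+1+d).choose (j+2) : ℚ) =
        (d : ℚ) * ((j+1+d).choose (j+1) : ℚ) / ((j:ℚ)+2) := by
      rw [eq_div_iff (by positivity)]
      have hq : ((j+1+d).choose (j+2) : ℚ) * ((j:ℚ)+2)
          = ((j+1+d).choose (j+1) : ℚ) * (d:ℚ) := by exact_mod_cast h1n
      linarith
    have hA : ((j+1+d).choose j : ℚ) =
        ((j:ℚ)+1) * ((j+1+d).choose (j+1) : ℚ) / ((d:ℚ)+1) := by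
      rw [eq_div_iff (by positivity)]
      have : ((j+1+d).choose (j+1) : ℚ) * ((j:ℚ)+1) = ((j+1+d).choose j : ℚ) * ((d:ℚ)+1) := by
        exact_mod_cast h2n
      linarith [this]
    rw [hD, hA]
    field_simp
    push_cast
    ring
  · have e1 : n.choose (j+1) = 0 := Nat.choose_eq_zero_of_lt h
    have e2 : n.choose (j+2) = 0 := Nat.choose_eq_zero_of_lt (by omega)
    simp [e1, e2]

lemma Eaux (n j : ℕ) :
    ((n:ℚ)+1) * ((n.choose (j+2):ℚ)^2) - ((n:ℚ)+1) * ((n.choose (j+1):ℚ)^2)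
      - ((n:ℚ)+1) * ((n.choose (j+1):ℚ)^2) + ((n:ℚ)+1) * ((n.choose j:ℚ)^2)
    - (2*(n:ℚ)+3) * (((n+1).choose (j+1):ℚ)^2)
    - (2*(n:ℚ)+3) * (((n+1).choose (j+2):ℚ)^2)
    + ((n:ℚ)+2) * (((n+2).choose (j+2):ℚ)^2) = 0 := by
  have p1 : (n+1).choose (j+2) = n.choose (j+1) + n.choose (j+2) := Nat.choose_succ_succ n (j+1)
  have p2 : (n+1).choose (j+1) = n.choose j + n.choose (j+1) := Nat.choose_succ_succ n j
  have p3 : (n+2).choose (j+2) = (n+1).choose (j+1) + (n+1).choose (j+2) :=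
    Nat.choose_succ_succ (n+1) (j+1)
  rw [p3, p1, p2]
  push_cast
  linear_combination (-2 : ℚ) * keyaux n j

lemma coeffS (N m : ℕ) :
    (∑ k ∈ Finset.range (N+1), Polynomial.C ((N.choose k : ℚ)^2) * Polynomial.X ^ k).coeff m
      = (N.choose m : ℚ)^2 := by
  rw [Polynomial.finset_sum_coeff]
  simp only [Polynomial.coeff_C_mul, Polynomial.coeff_X_pow, mul_ite, mul_one, mul_zero]
  rw [Finset.sum_ite_eq (Finset.range (N+1)) m fun k => (N.choose k : ℚ)^2]
  by_cases h : m ∈ Finset.range (N+1)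
  · simp [h]
  · rw [Finset.mem_range, not_lt] at h
    simp [Finset.mem_range, Nat.choose_eq_zero_of_lt (by omega : N < m), not_lt.mpr h]

theorem legendre_binom_sq_recurrence (n : ℕ) :
    Polynomial.C ((n : ℚ) + 1) * (1 - Polynomial.X) ^ 2 *
        (∑ k ∈ Finset.range (n + 1),
          Polynomial.C ((n.choose k : ℚ) ^ 2) * Polynomial.X ^ k) -
      Polynomial.C (2 * (n : ℚ) + 3) * (Polynomial.X + 1) *
        (∑ k ∈ Finset.range (n + 2),
          Polynomial.C (((n + 1).choose k : ℚ) ^ 2) * Polynomial.X ^ k) +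
      Polynomial.C ((n : ℚ) + 2) *
        (∑ k ∈ Finset.range (n + 3),
          Polynomial.C (((n + 2).choose k : ℚ) ^ 2) * Polynomial.X ^ k) = 0 := by
  set S0 := ∑ k ∈ Finset.range (n + 1), Polynomial.C ((n.choose k : ℚ) ^ 2) * Polynomial.X ^ k with hS0
  set S1 := ∑ k ∈ Finset.range (n + 2), Polynomial.C (((n+1).choose k : ℚ) ^ 2) * Polynomial.X ^ k with hS1
  set S2 := ∑ k ∈ Finset.range (n + 3), Polynomial.C (((n+2).choose k : ℚ) ^ 2) * Polynomial.X ^ k with hS2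
  have expand : Polynomial.C ((n : ℚ) + 1) * (1 - Polynomial.X) ^ 2 * S0 -
      Polynomial.C (2 * (n : ℚ) + 3) * (Polynomial.X + 1) * S1 +
      Polynomial.C ((n : ℚ) + 2) * S2 =
      Polynomial.C ((n : ℚ) + 1) * S0 - Polynomial.C ((n : ℚ) + 1) * (S0 * Polynomial.X ^ 1)
        - Polynomial.C ((n : ℚ) + 1) * (S0 * Polynomial.X ^ 1)
        + Polynomial.C ((n : ℚ) + 1) * (S0 * Polynomial.X ^ 2)
        - Polynomial.C (2 * (n : ℚ) + 3) * (S1 * Polynomial.X ^ 1)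
        - Polynomial.C (2 * (n : ℚ) + 3) * S1
        + Polynomial.C ((n : ℚ) + 2) * S2 := by ring
  rw [expand]
  ext m
  have c0 : ∀ m, S0.coeff m = (n.choose m : ℚ)^2 := fun m => coeffS n m
  have c1 : ∀ m, S1.coeff m = ((n+1).choose m : ℚ)^2 := fun m => coeffS (n+1) m
  have c2 : ∀ m, S2.coeff m = ((n+2).choose m : ℚ)^2 := fun m => coeffS (n+2) m
  simp only [Polynomial.coeff_add, Polynomial.coeff_sub, Polynomial.coeff_C_mul,
    Polynomial.coeff_zero, Polynomial.coeff_mul_X_pow', c0, c1, c2]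
  match m with
  | 0 =>
    norm_num
    ring
  | 1 =>
    norm_num [Nat.choose_one_right]
    ring
  | (j+2) =>
    simp only [show (1:ℕ) ≤ j+2 from by omega, show (2:ℕ) ≤ j+2 from by omega, if_true,
      show j+2-1 = j+1 from by omega, show j+2-2 = j from by omega]
    exact Eaux n j
end

section
/- For every natural number n, C(2n,n) · B_n / (n+1) = ∑_{k=0}^{n} S(n+k, k) · C(2n, n+k) · (-1)^k / (k+1), as an identity of rational numbers. -/
namespace CBS
open Finset Polynomial
lemma stirling2_succ_succ (n k : ℕ) :
    stirling2 (n+1) (k+1) = (k + 1) * stirling2 n (k + 1) + stirling2 n k := rfl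

lemma stirling2_eq_zero : ∀ n k : ℕ, n < k → stirling2 n k = 0 := by
  intro n
  induction n with
  | zero => intro k hk; match k, hk with | (k+1), _ => rfl
  | succ n ih =>
      intro k hk
      match k, hk with
      | (k+1), hk =>
        rw [stirling2_succ_succ, ih (k+1) (by omega), ih k (by omega)]; ring

lemma stirling2_self (k : ℕ) : stirling2 k k = 1 := by
  induction k with
  | zero => rfl
  | succ k ih => simp [stirling2_succ_succ, stirling2_eq_zero k (k+1) (by omega), ih]

lemma stirling2_zero (n : ℕ) : stirling2 (n+1) 0 = 0 := rfl

/-- power sums as values -/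

noncomputable def pval (m k : ℕ) : ℚ := ∑ i ∈ range (k+1), (i:ℚ)^m

lemma pval_zero (m : ℕ) (hm : 1 ≤ m) : pval m 0 = 0 := by
  simp [pval, zero_pow (by omega : m ≠ 0)]

lemma pval_succ (m k : ℕ) : pval m (k+1) = pval m k + ((k:ℚ)+1)^m := by
  simp [pval, Finset.sum_range_succ]

noncomputable def U (c : ℚ) : PowerSeries ℚ := 1 - PowerSeries.C c * PowerSeries.X

lemma coeff_U_succ (c : ℚ) (f : PowerSeries ℚ) (n : ℕ) :
    PowerSeries.coeff (n+1) (U c * f)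
      = PowerSeries.coeff (n+1) f - c * PowerSeries.coeff n f := by
  rw [U, sub_mul, one_mul, mul_assoc, map_sub, PowerSeries.coeff_C_mul,
    PowerSeries.coeff_succ_X_mul]

lemma coeff_U_zero (c : ℚ) (f : PowerSeries ℚ) :
    PowerSeries.coeff 0 (U c * f) = PowerSeries.coeff 0 f := by
  rw [U, sub_mul, one_mul, mul_assoc, map_sub, PowerSeries.coeff_C_mul, PowerSeries.coeff_zero_X_mul,
    mul_zero, sub_zero]

lemma U_ne_zero (c : ℚ) : U c ≠ 0 := by
  intro h
  have := congrArg (PowerSeries.constantCoeff) h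
  simp [U] at this

noncomputable def A (k : ℕ) : PowerSeries ℚ := PowerSeries.mk fun n => (stirling2 (n+k) k : ℚ)

noncomputable def DA (k : ℕ) : PowerSeries ℚ :=
  PowerSeries.mk fun n => (n : ℚ) * (stirling2 (n+k) k : ℚ)

noncomputable def B (k : ℕ) : PowerSeries ℚ :=
  PowerSeries.mk fun m => if m = 0 then 0 else pval m k

lemma hA (k : ℕ) : U ((k:ℚ)+1) * A (k+1) = A k := by
  ext n
  cases n with
  | zero => simp [coeff_U_zero, A, stirling2_self]
  | succ n =>
      rw [coeff_U_succ]
      simp only [A, PowerSeries.coeff_mk]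
      have h1 : n + 1 + (k + 1) = (n + (k+1)) + 1 := by omega
      have h2 : n + 1 + k = n + (k+1) := by omega
      rw [h1, h2, stirling2_succ_succ]
      push_cast
      ring

lemma hDA (k : ℕ) :
    U ((k:ℚ)+1) * DA (k+1)
      - PowerSeries.C ((k:ℚ)+1) * (PowerSeries.X * A (k+1)) = DA k := by
  ext n
  rw [map_sub, PowerSeries.coeff_C_mul]
  cases n with
  | zero => simp [coeff_U_zero, DA, A, PowerSeries.coeff_zero_X_mul]
  | succ n =>
      rw [coeff_U_succ, PowerSeries.coeff_succ_X_mul]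
      simp only [DA, A, PowerSeries.coeff_mk]
      have h1 : n + 1 + (k + 1) = (n + (k+1)) + 1 := by omega
      have h2 : n + 1 + k = n + (k+1) := by omega
      rw [h1, h2, stirling2_succ_succ]
      push_cast
      ring

lemma hB (k : ℕ) :
    U ((k:ℚ)+1) * B (k+1)
      = U ((k:ℚ)+1) * B k + PowerSeries.C ((k:ℚ)+1) * PowerSeries.X := by
  ext n
  rw [map_add, PowerSeries.coeff_C_mul]
  cases n with
  | zero => simp [coeff_U_zero, B]
  | succ n =>
      rw [coeff_U_succ, coeff_U_succ]
      simp only [B, PowerSeries.coeff_mk, PowerSeries.coeff_X]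
      cases n with
      | zero => simp [pval_succ]
      | succ n =>
          simp only [Nat.succ_ne_zero, if_false, if_neg (by omega : ¬ n + 1 + 1 = 1)]
          rw [pval_succ (n+1+1) k, pval_succ (n+1) k]
          push_cast
          ring

lemma B_zero : B 0 = 0 := by
  ext m
  cases m with
  | zero => simp [B]
  | succ m => simp [B, pval_zero (m+1) (by omega)]

lemma DA_zero : DA 0 = 0 := by
  ext n
  cases n with
  | zero => simp [DA]
  | succ n => simp [DA, stirling2_zero]

lemma E_eq_zero (k : ℕ) : DA k = A k * B k := by
  induction k with
  | zero => rw [DA_zero, B_zero, mul_zero]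
  | succ k ih =>
      have key : U ((k:ℚ)+1) * (DA (k+1) - A (k+1) * B (k+1)) = 0 := by
        have e1 := hA k
        have e2 := hDA k
        have e3 := hB k
        have h4 : U ((k:ℚ)+1) * (A (k+1) * B (k+1))
            = A k * B k + PowerSeries.C ((k:ℚ)+1) * (PowerSeries.X * A (k+1)) := by
          calc U ((k:ℚ)+1) * (A (k+1) * B (k+1))
              = (U ((k:ℚ)+1) * B (k+1)) * A (k+1) := by ring
            _ = (U ((k:ℚ)+1) * B k + PowerSeries.C ((k:ℚ)+1) * PowerSeries.X) * A (k+1) := by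
                  rw [e3]
            _ = B k * (U ((k:ℚ)+1) * A (k+1))
                  + PowerSeries.C ((k:ℚ)+1) * (PowerSeries.X * A (k+1)) := by ring
            _ = A k * B k + PowerSeries.C ((k:ℚ)+1) * (PowerSeries.X * A (k+1)) := by
                  rw [e1]; ring
        rw [mul_sub, h4, ← ih, ← e2]
        ring
      rcases mul_eq_zero.mp key with h | h
      · exact absurd h (U_ne_zero _)
      · exact sub_eq_zero.mp h

lemma star (n k : ℕ) :
    (n:ℚ) * (stirling2 (n+k) k : ℚ) = ∑ m ∈ range n, pval (n-m) k * (stirling2 (m+k) k : ℚ) := by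
  have h := congrArg (PowerSeries.coeff n) (E_eq_zero k)
  rw [PowerSeries.coeff_mul, Finset.Nat.sum_antidiagonal_eq_sum_range_succ_mk] at h
  simp only [DA, A, B, PowerSeries.coeff_mk] at h
  rw [Finset.sum_range_succ] at h
  simp only [Nat.sub_self, if_true, ite_true, mul_zero, add_zero] at h
  rw [h]
  refine Finset.sum_congr rfl fun m hm => ?_
  rw [if_neg (by have := Finset.mem_range.mp hm; omega : ¬ n - m = 0)]
  ring

/-- Faulhaber polynomial: P m evaluated at k equals ∑_{i=0}^{k} i^m -/

noncomputable def P (m : ℕ) : ℚ[X] :=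
  ∑ i ∈ range (m + 1),
    Polynomial.C (_root_.bernoulli i * ((m + 1).choose i : ℚ) / (m + 1)) * (X + 1) ^ (m + 1 - i)

lemma P_eval (m k : ℕ) : (P m).eval (k : ℚ) = pval m k := by
  rw [pval, sum_range_pow (k+1) m]
  rw [P, eval_finset_sum]
  refine Finset.sum_congr rfl fun i _ => ?_
  rw [eval_mul, eval_C, eval_pow, eval_add, eval_X, eval_one]
  push_cast
  ring

lemma P_natDegree_le (m : ℕ) : (P m).natDegree ≤ m + 1 := by
  refine Polynomial.natDegree_sum_le_of_forall_le _ _ fun i hi => ?_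
  refine le_trans (natDegree_mul_le) ?_
  simp only [natDegree_C, zero_add]
  refine le_trans (natDegree_pow_le) ?_
  have h1 : (X + 1 : ℚ[X]).natDegree ≤ 1 := by
    refine le_trans (natDegree_add_le _ _) ?_
    simp
  calc (m + 1 - i) * (X + 1 : ℚ[X]).natDegree ≤ (m+1-i) * 1 :=
        Nat.mul_le_mul_left _ h1
    _ ≤ m + 1 := by omega

lemma P_eval_zero (m : ℕ) (hm : 1 ≤ m) : (P m).eval 0 = 0 := by
  have h := P_eval m 0
  simp only [Nat.cast_zero] at h
  rw [h, pval]
  simp [zero_pow (by omega : m ≠ 0)]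

lemma choose_absorb (m i : ℕ) (h : i ≤ m) :
    ((m + 1 - i : ℕ) : ℚ) * ((m+1).choose i : ℚ) = ((m:ℚ)+1) * (m.choose i : ℚ) := by
  have h3 : (m+1) * m.choose i = (m+1).choose i * (m+1-i) :=
    (Nat.add_one_mul_choose_eq m i).trans (Nat.choose_succ_right_eq (m+1) i)
  calc ((m+1-i:ℕ):ℚ) * ((m+1).choose i : ℚ)
      = (((m+1).choose i * (m+1-i) : ℕ) : ℚ) := by push_cast; ring
    _ = (((m+1) * m.choose i : ℕ):ℚ) := by rw [← h3]
    _ = ((m:ℚ)+1) * (m.choose i : ℚ) := by push_cast; ring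

lemma P_derivative_eval_zero (m : ℕ) (hm : 2 ≤ m) :
    (P m).derivative.eval 0 = _root_.bernoulli m := by
  rw [P, derivative_sum, eval_finset_sum]
  have hterm : ∀ i ∈ range (m+1),
      ((Polynomial.C (_root_.bernoulli i * ((m + 1).choose i : ℚ) / (m + 1)) * (X + 1) ^ (m + 1 - i)).derivative).eval 0
        = _root_.bernoulli i * (m.choose i : ℚ) := by
    intro i hi
    have hi' : i ≤ m := by have := Finset.mem_range.mp hi; omega
    rw [derivative_C_mul, derivative_pow, derivative_add, derivative_X, derivative_one,
      add_zero, mul_one]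
    simp only [eval_mul, eval_C, eval_pow, eval_add, eval_X, eval_one, eval_natCast,
      zero_add, one_pow, mul_one]
    have habs := choose_absorb m i hi'
    have hne : (m:ℚ)+1 ≠ 0 := by positivity
    field_simp
    linear_combination (_root_.bernoulli i) * habs
  rw [Finset.sum_congr rfl hterm, Finset.sum_range_succ, Nat.choose_self, Nat.cast_one, mul_one]
  have hz : (∑ i ∈ range m, _root_.bernoulli i * (m.choose i : ℚ)) = 0 := by
    have h := _root_.sum_bernoulli m
    rw [if_neg (by omega : ¬ m = 1)] at h
    rw [← h]
    exact Finset.sum_congr rfl fun i _ => by ring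
  rw [hz, zero_add]




/-- interpolating polynomial of k ↦ S(n+k, k) -/

noncomputable def FF : ℕ → ℚ[X]
  | 0 => 1
  | n + 1 =>
      (((n:ℚ)+1)⁻¹) • ∑ m ∈ (Finset.range (n+1)).attach,
        P (n + 1 - m.1) * FF m.1
  decreasing_by exact Finset.mem_range.mp m.2

lemma FF_succ (n : ℕ) :
    FF (n+1) = (((n:ℚ)+1)⁻¹) • ∑ m ∈ (Finset.range (n+1)).attach, P (n + 1 - m.1) * FF m.1 := by
  rw [FF]

lemma FF_eval (n k : ℕ) : (FF n).eval (k:ℚ) = (stirling2 (n+k) k : ℚ) := by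
  induction n using Nat.strong_induction_on with
  | _ n ih =>
    match n with
    | 0 => simp [FF, stirling2_self]
    | (n+1) =>
      rw [FF_succ, eval_smul, eval_finset_sum]
      have hterm : ∀ m ∈ (Finset.range (n+1)).attach,
          (P (n + 1 - m.1) * FF m.1).eval (k:ℚ)
            = pval (n+1-m.1) k * (stirling2 (m.1+k) k : ℚ) := by
        intro m _
        rw [eval_mul, P_eval, ih m.1 (Finset.mem_range.mp m.2)]
      rw [Finset.sum_congr rfl hterm]
      rw [Finset.sum_attach (range (n+1)) (fun m => pval (n+1-m) k * (stirling2 (m+k) k : ℚ))]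
      rw [← star (n+1) k, smul_eq_mul]
      push_cast
      rw [← mul_assoc, inv_mul_cancel₀ (by positivity : ((n:ℚ)+1) ≠ 0), one_mul]

lemma FF_natDegree_le (n : ℕ) : (FF n).natDegree ≤ 2 * n := by
  induction n using Nat.strong_induction_on with
  | _ n ih =>
    match n with
    | 0 => simp [FF]
    | (n+1) =>
      rw [FF_succ]
      refine le_trans (natDegree_smul_le _ _) ?_
      refine Polynomial.natDegree_sum_le_of_forall_le _ _ fun m hm => ?_
      refine le_trans (natDegree_mul_le) ?_
      have h1 := P_natDegree_le (n + 1 - m.1)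
      have h2 := ih m.1 (Finset.mem_range.mp m.2)
      have hm' : m.1 ≤ n := by have := Finset.mem_range.mp m.2; omega
      omega

lemma FF_eval_zero (n : ℕ) (hn : 1 ≤ n) : (FF n).eval 0 = 0 := by
  have h := FF_eval n 0
  simp only [Nat.cast_zero, Nat.add_zero] at h
  rw [h]
  match n, hn with
  | (n+1), _ => rw [stirling2_zero]; norm_num

lemma FF_derivative_eval_zero (n : ℕ) (hn : 2 ≤ n) :
    (FF n).derivative.eval 0 = _root_.bernoulli n / n := by
  match n, hn with
  | (n+1), hn =>
    rw [FF_succ, derivative_smul, eval_smul, derivative_sum, eval_finset_sum]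
    have hterm : ∀ m ∈ (Finset.range (n+1)).attach,
        ((P (n + 1 - m.1) * FF m.1).derivative).eval 0
          = if m.1 = 0 then _root_.bernoulli (n+1) else 0 := by
      intro m _
      have hm : m.1 < n + 1 := Finset.mem_range.mp m.2
      rw [derivative_mul, eval_add, eval_mul, eval_mul]
      rcases Nat.eq_zero_or_pos m.1 with h0 | hpos
      · rw [if_pos h0, h0]
        simp only [FF, Nat.sub_zero, eval_one, derivative_one, eval_zero, mul_zero, add_zero,
          mul_one]
        exact P_derivative_eval_zero (n+1) (by omega)
      · rw [if_neg (by omega)]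
        rw [FF_eval_zero m.1 hpos, P_eval_zero (n+1-m.1) (by omega), mul_zero, zero_mul,
          add_zero]
    rw [Finset.sum_congr rfl hterm]
    rw [Finset.sum_attach (range (n+1)) (fun m => if m = 0 then _root_.bernoulli (n+1) else 0)]
    rw [Finset.sum_ite_eq' (range (n+1)) 0 (fun _ => _root_.bernoulli (n+1))]
    rw [if_pos (Finset.mem_range.mpr (by omega))]
    rw [smul_eq_mul]
    push_cast
    field_simp




/-- polynomials agreeing on all naturals are equal -/

lemma poly_ext {p q : ℚ[X]} (h : ∀ k : ℕ, p.eval (k:ℚ) = q.eval (k:ℚ)) : p = q := by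
  have hroot : {x : ℚ | (p - q).IsRoot x}.Infinite := by
    apply Set.Infinite.mono (s := Set.range (Nat.cast : ℕ → ℚ))
    · rintro x ⟨k, rfl⟩
      simp [IsRoot, h k]
    · exact Set.infinite_range_of_injective Nat.cast_injective
  have := Polynomial.eq_zero_of_infinite_isRoot _ hroot
  exact sub_eq_zero.mp this

/-- the difference equation as polynomial identity -/

lemma FF_diff (n : ℕ) :
    (FF (n+1)).comp (X + 1) - FF (n+1) = (X + 1) * (FF n).comp (X + 1) := by
  apply poly_ext
  intro k
  simp only [eval_sub, eval_mul, eval_comp, eval_add, eval_X, eval_one]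
  have h1 : ((k:ℚ) + 1) = ((k+1 : ℕ) : ℚ) := by push_cast; ring
  rw [h1, FF_eval, FF_eval, FF_eval]
  have e1 : n + 1 + (k+1) = (n + (k+1)) + 1 := by omega
  have e2 : n + 1 + k = n + (k + 1) := by omega
  rw [e1, e2, stirling2_succ_succ]
  push_cast
  ring

lemma FF_eval_neg (n : ℕ) (hn : 1 ≤ n) : ∀ a : ℕ, a ≤ n → (FF n).eval (-(a:ℚ)) = 0 := by
  induction n with
  | zero => omega
  | succ n ih =>
      intro a ha
      induction a with
      | zero => simpa using FF_eval_zero (n+1) (by omega)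
      | succ a iha =>
          have hdiff := congrArg (Polynomial.eval (-(a:ℚ)-1)) (FF_diff n)
          simp only [eval_sub, eval_mul, eval_comp, eval_add, eval_X, eval_one] at hdiff
          have hs : (-(a:ℚ) - 1 + 1) = -(a:ℚ) := by ring
          rw [hs] at hdiff
          have h1 : (FF (n+1)).eval (-(a:ℚ)) = 0 := iha (by omega)
          have h2 : (-(a:ℚ)) * (FF n).eval (-(a:ℚ)) = 0 := by
            rcases Nat.eq_zero_or_pos a with h0 | hpos
            · rw [h0]; norm_num
            · rw [ih (by omega) a (by omega), mul_zero]
          have : (FF (n+1)).eval (-(a:ℚ)-1) = 0 := by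
            rw [h1] at hdiff
            rw [← h2] at hdiff
            linarith
          have hc : (-(a:ℚ)-1) = -((a+1 : ℕ):ℚ) := by push_cast; ring
          rw [← hc]
          exact this

lemma FF_derivative_eval_negone (n : ℕ) (hn : 2 ≤ n) :
    (FF n).derivative.eval (-1) = _root_.bernoulli n / n := by
  match n, hn with
  | (n+1), hn =>
    have hdiff := congrArg Polynomial.derivative (FF_diff n)
    rw [derivative_sub, derivative_comp, derivative_mul, derivative_comp] at hdiff
    have := congrArg (Polynomial.eval (-1 : ℚ)) hdiff
    simp only [eval_sub, eval_add, eval_mul, eval_comp, eval_add, eval_X, eval_one,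
      derivative_add, derivative_X, derivative_one, add_zero, eval_one, one_mul] at this
    have hs : (-1 : ℚ) + 1 = 0 := by ring
    rw [hs] at this
    rw [FF_eval_zero n (by omega)] at this
    have h0 := FF_derivative_eval_zero (n+1) hn
    -- this : eval 0 (derivative FF(n+1)) - eval (-1) (derivative FF(n+1)) = 0 + (-1+1)*... = 0
    rw [h0] at this
    simp at this
    push_cast at this ⊢
    linarith

/-- alternating binomial sums kill monomials of low degree -/

lemma mono_lemma : ∀ N : ℕ, ∀ i : ℕ, i < N →
    ∑ j ∈ range (N+1), (-1:ℚ)^j * (N.choose j : ℚ) * (j:ℚ)^i = 0 := by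
  intro N
  induction N with
  | zero => omega
  | succ N ih =>
      intro i hi
      cases i with
      | zero =>
          simp only [pow_zero, mul_one]
          have h := Int.alternating_sum_range_choose (n := N+1)
          rw [if_neg (by omega : ¬ N+1 = 0)] at h
          have := congrArg (Int.cast : ℤ → ℚ) h
          push_cast at this
          rw [← this]
      | succ i =>
          rw [Finset.sum_range_succ']
          simp only [Nat.cast_zero, ne_eq]
          rw [zero_pow (by omega : i + 1 ≠ 0), mul_zero, add_zero]
          have hterm : ∀ j, (-1:ℚ)^(j+1) * ((N+1).choose (j+1) : ℚ) * ((j+1:ℕ):ℚ)^(i+1)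
              = -((N:ℚ)+1) * ((-1:ℚ)^j * (N.choose j : ℚ) * ((j:ℚ)+1)^i) := by
            intro j
            have hch : (N+1) * N.choose j = (N+1).choose (j+1) * (j+1) :=
              Nat.add_one_mul_choose_eq N j
            have hch' : ((N:ℚ)+1) * (N.choose j : ℚ)
                = ((N+1).choose (j+1) : ℚ) * ((j:ℚ)+1) := by
              exact_mod_cast congrArg (Nat.cast : ℕ → ℚ) hch
            have hpow : ((j+1:ℕ):ℚ)^(i+1) = ((j:ℚ)+1)^i * ((j:ℚ)+1) := by
              push_cast; ring
            rw [hpow, pow_succ]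
            linear_combination ((-1:ℚ)^j * ((j:ℚ)+1)^i) * hch'
          rw [Finset.sum_congr rfl (fun j _ => hterm j)]
          rw [← Finset.mul_sum]
          have hz : ∑ j ∈ range (N+1), (-1:ℚ)^j * (N.choose j : ℚ) * ((j:ℚ)+1)^i = 0 := by
            have hexp : ∀ j : ℕ, ((j:ℚ)+1)^i = ∑ t ∈ range (i+1), (i.choose t : ℚ) * (j:ℚ)^t := by
              intro j
              rw [add_pow]
              refine Finset.sum_congr rfl fun t ht => ?_
              simp [mul_comm]
            calc ∑ j ∈ range (N+1), (-1:ℚ)^j * (N.choose j : ℚ) * ((j:ℚ)+1)^i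
                = ∑ j ∈ range (N+1), ∑ t ∈ range (i+1),
                    (i.choose t : ℚ) * ((-1:ℚ)^j * (N.choose j : ℚ) * (j:ℚ)^t) := by
                  refine Finset.sum_congr rfl fun j _ => ?_
                  rw [hexp j, Finset.mul_sum]
                  refine Finset.sum_congr rfl fun t _ => by ring
              _ = ∑ t ∈ range (i+1), (i.choose t : ℚ) *
                    ∑ j ∈ range (N+1), (-1:ℚ)^j * (N.choose j : ℚ) * (j:ℚ)^t := by
                  rw [Finset.sum_comm]
                  refine Finset.sum_congr rfl fun t _ => by rw [Finset.mul_sum]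
              _ = 0 := by
                  refine Finset.sum_eq_zero fun t ht => ?_
                  rw [ih t (by have := Finset.mem_range.mp ht; omega), mul_zero]
          rw [hz, mul_zero]

/-- full alternating sum of a low-degree polynomial vanishes -/

lemma alt_poly (N : ℕ) (p : ℚ[X]) (hdeg : p.natDegree < N) :
    ∑ j ∈ range (N+1), (-1:ℚ)^j * (N.choose j : ℚ) * p.eval (j:ℚ) = 0 := by
  calc ∑ j ∈ range (N+1), (-1:ℚ)^j * (N.choose j : ℚ) * p.eval (j:ℚ)
      = ∑ j ∈ range (N+1), ∑ i ∈ range N,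
          p.coeff i * ((-1:ℚ)^j * (N.choose j : ℚ) * (j:ℚ)^i) := by
        refine Finset.sum_congr rfl fun j _ => ?_
        rw [eval_eq_sum_range' hdeg, Finset.mul_sum]
        refine Finset.sum_congr rfl fun i _ => by ring
    _ = ∑ i ∈ range N, p.coeff i *
          ∑ j ∈ range (N+1), (-1:ℚ)^j * (N.choose j : ℚ) * (j:ℚ)^i := by
        rw [Finset.sum_comm]
        refine Finset.sum_congr rfl fun i _ => by rw [Finset.mul_sum]
    _ = 0 := by
        refine Finset.sum_eq_zero fun i hi => ?_
        rw [mono_lemma N i (Finset.mem_range.mp hi), mul_zero]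

/-- shifted version -/

lemma alt_poly_shift (N : ℕ) (p : ℚ[X]) (hdeg : p.natDegree < N) (c : ℚ) :
    ∑ j ∈ range (N+1), (-1:ℚ)^j * (N.choose j : ℚ) * p.eval ((j:ℚ) + c) = 0 := by
  have hq : (p.comp (X + C c)).natDegree < N := by
    rwa [natDegree_comp, natDegree_X_add_C, mul_one]
  have h := alt_poly N _ hq
  simpa [eval_comp] using h




lemma main_identity (n : ℕ) (hn : 2 ≤ n) :
    ∑ k ∈ Finset.range (n + 1),
        (stirling2 (n + k) k : ℚ) * ((2 * n).choose (n + k) : ℚ) * (-1 : ℚ) ^ k / ((k : ℚ) + 1)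
      = ((2*n).choose (n-1) : ℚ) * _root_.bernoulli n / n := by
  set G : ℚ[X] := FF n /ₘ (X - C (-1)) with hGdef
  have hroot : (FF n).IsRoot (-1) := by
    have := FF_eval_neg n (by omega) 1 (by omega)
    simpa [IsRoot] using this
  have hfac : (X - C (-1)) * G = FF n := mul_divByMonic_eq_iff_isRoot.mpr hroot
  have hGdeg : G.natDegree < 2 * n := by
    rcases eq_or_ne G 0 with h0 | h0
    · rw [h0, natDegree_zero]; omega
    · have := natDegree_mul (X_sub_C_ne_zero (-1)) h0
      rw [hfac, natDegree_X_sub_C] at this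
      have := FF_natDegree_le n
      omega
  have hGeval : ∀ k : ℕ, G.eval (k:ℚ) = (stirling2 (n+k) k : ℚ) / ((k:ℚ)+1) := by
    intro k
    have := congrArg (Polynomial.eval (k:ℚ)) hfac
    simp only [eval_mul, eval_sub, eval_X, eval_C, sub_neg_eq_add] at this
    rw [FF_eval] at this
    have hne : (k:ℚ) + 1 ≠ 0 := by positivity
    field_simp [← this]
    linear_combination this
  have hGnegone : G.eval (-1) = _root_.bernoulli n / n := by
    have hder := congrArg Polynomial.derivative hfac
    rw [derivative_mul, derivative_X_sub_C, one_mul] at hder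
    have := congrArg (Polynomial.eval (-1:ℚ)) hder
    simp only [eval_add, eval_mul, eval_sub, eval_X, eval_C, sub_neg_eq_add] at this
    rw [FF_derivative_eval_negone n hn] at this
    simpa using this
  have hGneg : ∀ a : ℕ, 2 ≤ a → a ≤ n → G.eval (-(a:ℚ)) = 0 := by
    intro a ha2 han
    have := congrArg (Polynomial.eval (-(a:ℚ))) hfac
    simp only [eval_mul, eval_sub, eval_X, eval_C, sub_neg_eq_add] at this
    rw [FF_eval_neg n (by omega) a han] at this
    have hne : (-(a:ℚ) + 1) ≠ 0 := by
      intro h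
      have : (a:ℚ) = 1 := by linarith
      have : a = 1 := by exact_mod_cast this
      omega
    exact (mul_eq_zero.mp this).resolve_left hne
  have halt := alt_poly_shift (2*n) G hGdeg (-(n:ℚ))
  -- split the sum
  have hsplit : ∑ j ∈ range (2*n+1), (-1:ℚ)^j * ((2*n).choose j : ℚ) * G.eval ((j:ℚ) + (-(n:ℚ)))
      = (∑ j ∈ range n, (-1:ℚ)^j * ((2*n).choose j : ℚ) * G.eval ((j:ℚ) - n))
        + ∑ i ∈ range (n+1), (-1:ℚ)^(n+i) * ((2*n).choose (n+i) : ℚ) * G.eval (i:ℚ) := by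
    rw [← Finset.sum_range_add_sum_Ico _ (by omega : n ≤ 2*n+1)]
    congr 1
    · refine Finset.sum_congr rfl fun j _ => by rw [sub_eq_add_neg]
    · rw [Finset.sum_Ico_eq_sum_range]
      refine Finset.sum_congr (by congr 1; omega) fun i _ => ?_
      congr 1
      push_cast
      ring
  have hlow : ∑ j ∈ range n, (-1:ℚ)^j * ((2*n).choose j : ℚ) * G.eval ((j:ℚ) - n)
      = (-1:ℚ)^(n-1) * ((2*n).choose (n-1) : ℚ) * (_root_.bernoulli n / n) := by
    rw [Finset.sum_eq_single_of_mem (n-1) (Finset.mem_range.mpr (by omega))]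
    · have hc : ((n-1 : ℕ):ℚ) - n = -1 := by
        rw [Nat.cast_sub (by omega : 1 ≤ n)]
        push_cast; ring
      rw [hc, hGnegone]
    · intro j hj hne
      have hj' : j < n := Finset.mem_range.mp hj
      have hcast : (j:ℚ) - n = -(((n - j : ℕ)):ℚ) := by
        rw [Nat.cast_sub (by omega : j ≤ n)]
        ring
      rw [hcast, hGneg (n-j) (by omega) (by omega), mul_zero]
  have hhigh : ∑ i ∈ range (n+1), (-1:ℚ)^(n+i) * ((2*n).choose (n+i) : ℚ) * G.eval (i:ℚ)
      = (-1:ℚ)^n * ∑ k ∈ Finset.range (n + 1),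
          (stirling2 (n + k) k : ℚ) * ((2 * n).choose (n + k) : ℚ) * (-1 : ℚ) ^ k / ((k : ℚ) + 1) := by
    rw [Finset.mul_sum]
    refine Finset.sum_congr rfl fun i _ => ?_
    rw [hGeval i, pow_add]
    ring
  rw [hsplit, hlow, hhigh] at halt
  have hsign : (-1:ℚ)^(n-1) = -(-1:ℚ)^n := by
    have : n - 1 + 1 = n := by omega
    calc (-1:ℚ)^(n-1) = (-1:ℚ)^(n-1) * ((-1)*(-1)) := by ring
      _ = -((-1:ℚ)^(n-1+1)) := by ring
      _ = -(-1:ℚ)^n := by rw [this]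
  rw [hsign] at halt
  have hne : (-1:ℚ)^n ≠ 0 := by
    intro h
    exact absurd h (pow_ne_zero _ (by norm_num))
  have h2 : (-1:ℚ)^n * (∑ k ∈ Finset.range (n + 1),
        (stirling2 (n + k) k : ℚ) * ((2 * n).choose (n + k) : ℚ) * (-1 : ℚ) ^ k / ((k : ℚ) + 1))
      = (-1:ℚ)^n * (((2*n).choose (n-1) : ℚ) * _root_.bernoulli n / n) := by
    linear_combination halt
  exact mul_left_cancel₀ hne h2

end CBS

theorem catalan_bernoulli_stirling2 (n : ℕ) :
    ((2 * n).choose n : ℚ) * bernoulli n / ((n : ℚ) + 1) =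
      ∑ k ∈ Finset.range (n + 1),
        (stirling2 (n + k) k : ℚ) * ((2 * n).choose (n + k) : ℚ) *
          (-1 : ℚ) ^ k / ((k : ℚ) + 1) := by
  match n with
  | 0 =>
      rw [Finset.sum_range_one]
      norm_num [bernoulli_zero]
      rfl
  | 1 =>
      rw [Finset.sum_range_succ, Finset.sum_range_one]
      have h0 : stirling2 1 0 = 0 := rfl
      have h1 : stirling2 2 1 = 1 := rfl
      rw [h0, h1]
      norm_num [bernoulli_one]
  | (n+2) =>
      rw [CBS.main_identity (n+2) (by omega)]
      have he : (n + 2 - 1) = n + 1 := by omega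
      rw [he]
      have hch : (2*(n+2)).choose (n+2) * (n+2) = (2*(n+2)).choose (n+1) * ((n+2)+1) := by
        have h := Nat.choose_succ_right_eq (2*(n+2)) (n+1)
        have h2 : 2*(n+2) - (n+1) = (n+2)+1 := by omega
        rw [h2] at h
        exact h
      have hch' : ((2*(n+2)).choose (n+2) : ℚ) * (((n+2:ℕ)):ℚ)
          = ((2*(n+2)).choose (n+1) : ℚ) * ((((n+2:ℕ)):ℚ)+1) := by
        exact_mod_cast hch
      have hne1 : (((n+2:ℕ)):ℚ) + 1 ≠ 0 := by positivity
      have hne0 : (((n+2:ℕ)):ℚ) ≠ 0 := by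
        have : ((n+2:ℕ):ℚ) = (n:ℚ)+2 := by push_cast; ring
        rw [this]; positivity
      rw [div_eq_div_iff hne1 hne0]
      linear_combination bernoulli (n+2) * hch'
end
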